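/- arXiv:1201.1178 — 10 statements merged into one kernel-verified Lean document; each statement's English description precedes it below -/
import Mathlib

section
/- For every integer K ≥ 1 and real λ, μ > 0 and s > 0, there exists a unique ρ > 0 such that s = (λ/μ)ρ + Σ_{k=1}^{K} k ν_ρ(k), where ν_ρ(k) = ρ^k(1-ρ)/(1-ρ^{K+1}) for ρ ≠ 1 and ν_1(k) = 1/(K+1). In other words, the map ρ ↦ (λ/μ)ρ + Σ_{k=1}^K k ν_ρ(k) is a strictly increasing bijection from (0,∞) onto (0,∞). -/
/-- Stationary distribution ν_ρ of an M/M/1/K queue with load ρ (truncated geometric). -/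
noncomputable def nu (K : ℕ) (ρ : ℝ) (k : ℕ) : ℝ :=
  if ρ = 1 then 1 / (K + 1) else ρ ^ k * (1 - ρ) / (1 - ρ ^ (K + 1))

/-- The fixed-point map ρ ↦ (λ/μ) ρ + Σ_{k=1}^K k ν_ρ(k). -/
noncomputable def S (K : ℕ) (lam mu : ℝ) (ρ : ℝ) : ℝ :=
  lam / mu * ρ + ∑ k ∈ Finset.Icc 1 K, (k : ℝ) * nu K ρ k

open Finset

noncomputable def Bq (K : ℕ) (ρ : ℝ) : ℝ := ∑ j ∈ range (K + 1), ρ ^ j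
noncomputable def Aq (K : ℕ) (ρ : ℝ) : ℝ := ∑ k ∈ range (K + 1), (k : ℝ) * ρ ^ k

lemma Bq_pos {K : ℕ} {ρ : ℝ} (hρ : 0 < ρ) : 0 < Bq K ρ :=
  Finset.sum_pos (fun i _ => pow_pos hρ i) nonempty_range_add_one

lemma Bq_ge_one {K : ℕ} {ρ : ℝ} (hρ : 0 ≤ ρ) : 1 ≤ Bq K ρ := by
  have : Bq K ρ = (∑ i ∈ range K, ρ ^ (i + 1)) + 1 := by
    simpa [Bq] using Finset.sum_range_succ' (fun j => ρ ^ j) K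
  rw [this]
  have : 0 ≤ ∑ i ∈ range K, ρ ^ (i + 1) :=
    Finset.sum_nonneg fun i _ => pow_nonneg hρ _
  linarith

lemma Aq_nonneg {K : ℕ} {ρ : ℝ} (hρ : 0 ≤ ρ) : 0 ≤ Aq K ρ :=
  Finset.sum_nonneg fun k _ => mul_nonneg (by positivity) (pow_nonneg hρ k)

lemma nu_eq {K : ℕ} {ρ : ℝ} (hρ : 0 < ρ) (k : ℕ) : nu K ρ k = ρ ^ k / Bq K ρ := by
  unfold nu Bq
  by_cases h : ρ = 1
  · subst h; simp
  · rw [if_neg h]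
    have hgeo : (∑ j ∈ range (K + 1), ρ ^ j) * (ρ - 1) = ρ ^ (K + 1) - 1 := geom_sum_mul ρ (K + 1)
    have h1 : 1 - ρ ^ (K + 1) = (∑ j ∈ range (K + 1), ρ ^ j) * (1 - ρ) := by linarith
    rw [h1]
    have hB : (0:ℝ) < ∑ j ∈ range (K + 1), ρ ^ j :=
      Finset.sum_pos (fun i _ => pow_pos hρ i) nonempty_range_add_one
    have hne : (1:ℝ) - ρ ≠ 0 := fun hc => h (by linarith)
    field_simp

lemma S_eq {K : ℕ} (lam mu : ℝ) {ρ : ℝ} (hρ : 0 < ρ) :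
    S K lam mu ρ = lam / mu * ρ + Aq K ρ / Bq K ρ := by
  unfold S Aq
  congr 1
  have hsub : Finset.Icc 1 K ⊆ range (K + 1) := by
    intro x hx
    simp only [Finset.mem_Icc] at hx
    simp [Nat.lt_succ_of_le hx.2]
  rw [Finset.sum_div, ← Finset.sum_subset hsub (fun x hmem hx => ?_)]
  · exact Finset.sum_congr rfl fun k _ => by rw [nu_eq hρ k, mul_div_assoc]
  · have : x = 0 := by
      simp only [Finset.mem_range] at hmem
      simp only [Finset.mem_Icc, not_and, not_le] at hx
      omega
    simp [this]

lemma pow_cross {ρ σ : ℝ} (hρ : 0 ≤ ρ) (hρσ : ρ ≤ σ) {j k : ℕ} (hjk : j ≤ k) :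
    σ ^ j * ρ ^ k ≤ σ ^ k * ρ ^ j := by
  obtain ⟨m, rfl⟩ := Nat.exists_eq_add_of_le hjk
  have hσ : (0:ℝ) ≤ σ := le_trans hρ hρσ
  have h1 : ρ ^ m ≤ σ ^ m := pow_le_pow_left₀ hρ hρσ m
  have h2 : (0:ℝ) ≤ σ ^ j * ρ ^ j := mul_nonneg (pow_nonneg hσ j) (pow_nonneg hρ j)
  calc σ ^ j * ρ ^ (j + m) = σ ^ j * ρ ^ j * ρ ^ m := by rw [pow_add]; ring
    _ ≤ σ ^ j * ρ ^ j * σ ^ m := by nlinarith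
    _ = σ ^ (j + m) * ρ ^ j := by rw [pow_add]; ring

lemma cross {K : ℕ} {ρ σ : ℝ} (hρ : 0 ≤ ρ) (hρσ : ρ ≤ σ) :
    Aq K ρ * Bq K σ ≤ Aq K σ * Bq K ρ := by
  set P := range (K + 1)
  have e1 : Aq K σ * Bq K ρ = ∑ k ∈ P, ∑ j ∈ P, (k : ℝ) * σ ^ k * ρ ^ j := by
    rw [Aq, Bq, Finset.sum_mul_sum]
  have e2 : Aq K ρ * Bq K σ = ∑ k ∈ P, ∑ j ∈ P, (j : ℝ) * σ ^ k * ρ ^ j := by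
    rw [Aq, Bq, Finset.sum_mul_sum, Finset.sum_comm]
    exact Finset.sum_congr rfl fun k _ => Finset.sum_congr rfl fun j _ => by ring
  rw [e1, e2, ← sub_nonneg, ← Finset.sum_sub_distrib]
  simp_rw [← Finset.sum_sub_distrib]
  have key : ∀ k j : ℕ, 0 ≤ ((k : ℝ) - j) * (σ ^ k * ρ ^ j - σ ^ j * ρ ^ k) := by
    intro k j
    rcases le_total j k with h | h
    · exact mul_nonneg (sub_nonneg.2 (by exact_mod_cast h))
        (sub_nonneg.2 (pow_cross hρ hρσ h))
    · have h1 : ((k : ℝ) - j) ≤ 0 := sub_nonpos.2 (by exact_mod_cast h)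
      have h2 : σ ^ k * ρ ^ j ≤ σ ^ j * ρ ^ k := pow_cross hρ hρσ h
      nlinarith
  have hswap : ∑ k ∈ P, ∑ j ∈ P, ((k:ℝ) * σ ^ k * ρ ^ j - (j:ℝ) * σ ^ k * ρ ^ j)
      = ∑ k ∈ P, ∑ j ∈ P, ((j:ℝ) * σ ^ j * ρ ^ k - (k:ℝ) * σ ^ j * ρ ^ k) :=
    Finset.sum_comm
  have h2 : 0 ≤ 2 * ∑ k ∈ P, ∑ j ∈ P, ((k:ℝ) * σ ^ k * ρ ^ j - (j:ℝ) * σ ^ k * ρ ^ j) := by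
    rw [two_mul]
    nth_rewrite 2 [hswap]
    rw [← Finset.sum_add_distrib]
    simp_rw [← Finset.sum_add_distrib]
    refine Finset.sum_nonneg fun k _ => Finset.sum_nonneg fun j _ => ?_
    have := key k j
    nlinarith [key k j]
  linarith

lemma S_mono {K : ℕ} (lam mu : ℝ) (hlam : 0 < lam) (hmu : 0 < mu) :
    StrictMonoOn (S K lam mu) (Set.Ioi (0 : ℝ)) := by
  intro ρ hρ σ hσ hlt
  simp only [Set.mem_Ioi] at hρ hσ
  rw [S_eq lam mu hρ, S_eq lam mu hσ]
  have h1 : lam / mu * ρ < lam / mu * σ :=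
    mul_lt_mul_of_pos_left hlt (div_pos hlam hmu)
  have h2 : Aq K ρ / Bq K ρ ≤ Aq K σ / Bq K σ := by
    rw [div_le_div_iff₀ (Bq_pos hρ) (Bq_pos hσ)]
    exact cross hρ.le hlt.le
  linarith

lemma S_pos {K : ℕ} (lam mu : ℝ) (hlam : 0 < lam) (hmu : 0 < mu) {ρ : ℝ} (hρ : 0 < ρ) :
    0 < S K lam mu ρ := by
  rw [S_eq lam mu hρ]
  have h1 : 0 < lam / mu * ρ := mul_pos (div_pos hlam hmu) hρ
  have h2 : 0 ≤ Aq K ρ / Bq K ρ := div_nonneg (Aq_nonneg hρ.le) (Bq_pos hρ).le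
  linarith

lemma S_contOn {K : ℕ} (lam mu : ℝ) : ContinuousOn (S K lam mu) (Set.Ioi (0 : ℝ)) := by
  have hA : Continuous (fun ρ : ℝ => Aq K ρ) := by
    unfold Aq; exact continuous_finset_sum _ fun i _ => by fun_prop
  have hB : Continuous (fun ρ : ℝ => Bq K ρ) := by
    unfold Bq; exact continuous_finset_sum _ fun i _ => by fun_prop
  have hT : ContinuousOn (fun ρ : ℝ => lam / mu * ρ + Aq K ρ / Bq K ρ) (Set.Ioi 0) := by
    apply ContinuousOn.add (by fun_prop)
    exact ContinuousOn.div hA.continuousOn hB.continuousOn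
      fun x hx => (Bq_pos (Set.mem_Ioi.1 hx)).ne'
  exact hT.congr fun x hx => S_eq lam mu (Set.mem_Ioi.1 hx)

lemma S_upper {K : ℕ} (lam mu : ℝ) {ρ : ℝ} (hρ : 0 < ρ) (hρ1 : ρ ≤ 1) :
    S K lam mu ρ ≤ (lam / mu + ∑ k ∈ range (K + 1), (k : ℝ)) * ρ := by
  rw [S_eq lam mu hρ]
  have h1 : Aq K ρ / Bq K ρ ≤ Aq K ρ := div_le_self (Aq_nonneg hρ.le) (Bq_ge_one hρ.le)
  have h2 : Aq K ρ ≤ (∑ k ∈ range (K + 1), (k : ℝ)) * ρ := by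
    rw [Finset.sum_mul]
    refine Finset.sum_le_sum fun k _ => ?_
    rcases Nat.eq_zero_or_pos k with h | h
    · simp [h]
    · exact mul_le_mul_of_nonneg_left (pow_le_of_le_one hρ.le hρ1 h.ne') (by positivity)
  nlinarith

lemma S_lower {K : ℕ} (lam mu : ℝ) (hlam : 0 < lam) (hmu : 0 < mu) {ρ : ℝ} (hρ : 0 < ρ) :
    lam / mu * ρ ≤ S K lam mu ρ := by
  rw [S_eq lam mu hρ]
  have : 0 ≤ Aq K ρ / Bq K ρ := div_nonneg (Aq_nonneg hρ.le) (Bq_pos hρ).le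
  linarith

theorem fixed_point_exists_unique (K : ℕ) (hK : 1 ≤ K) (lam mu : ℝ)
    (hlam : 0 < lam) (hmu : 0 < mu) :
    (∀ s : ℝ, 0 < s → ∃! ρ : ℝ, 0 < ρ ∧ s = S K lam mu ρ) ∧
    StrictMonoOn (S K lam mu) (Set.Ioi (0 : ℝ)) ∧
    Set.BijOn (S K lam mu) (Set.Ioi (0 : ℝ)) (Set.Ioi (0 : ℝ)) := by
  have hmono := S_mono (K := K) lam mu hlam hmu
  have hcont := S_contOn (K := K) lam mu
  set C : ℝ := ∑ k ∈ range (K + 1), (k : ℝ) with hCdef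
  have hC : 0 ≤ C := Finset.sum_nonneg fun k _ => Nat.cast_nonneg k
  have hD : (0:ℝ) < lam / mu + C := by positivity
  set D : ℝ := lam / mu + C with hDdef
  -- existence
  have hex : ∀ s : ℝ, 0 < s → ∃ ρ : ℝ, 0 < ρ ∧ S K lam mu ρ = s := by
    intro s hs
    set ρ₀ : ℝ := min 1 (s / (2 * D)) with hρ₀def
    have hρ₀pos : 0 < ρ₀ := lt_min one_pos (by positivity)
    have hρ₀le1 : ρ₀ ≤ 1 := min_le_left _ _
    have hS0 : S K lam mu ρ₀ < s := by
      have h1 := S_upper (K := K) lam mu hρ₀pos hρ₀le1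
      have h2 : D * ρ₀ ≤ D * (s / (2 * D)) :=
        mul_le_mul_of_nonneg_left (min_le_right _ _) hD.le
      have h3 : D * (s / (2 * D)) = s / 2 := by
        field_simp
      have : D * ρ₀ ≤ s / 2 := by rw [← h3]; exact h2
      calc S K lam mu ρ₀ ≤ D * ρ₀ := h1
        _ ≤ s / 2 := this
        _ < s := by linarith
    set ρ₁ : ℝ := max 1 (2 * s * mu / lam) with hρ₁def
    have hρ₀ρ₁ : ρ₀ ≤ ρ₁ := le_trans hρ₀le1 (le_max_left _ _)
    have hρ₁pos : 0 < ρ₁ := lt_of_lt_of_le one_pos (le_max_left _ _)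
    have hS1 : s < S K lam mu ρ₁ := by
      have h1 := S_lower (K := K) lam mu hlam hmu hρ₁pos
      have h2 : lam / mu * (2 * s * mu / lam) ≤ lam / mu * ρ₁ :=
        mul_le_mul_of_nonneg_left (le_max_right _ _) (div_pos hlam hmu).le
      have h3 : lam / mu * (2 * s * mu / lam) = 2 * s := by
        field_simp
      nlinarith
    have hsub : Set.Icc ρ₀ ρ₁ ⊆ Set.Ioi (0:ℝ) :=
      fun x hx => lt_of_lt_of_le hρ₀pos hx.1
    have hIvt := intermediate_value_Icc hρ₀ρ₁ (hcont.mono hsub)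
    obtain ⟨ρ, hρmem, hρeq⟩ := hIvt ⟨hS0.le, hS1.le⟩
    exact ⟨ρ, lt_of_lt_of_le hρ₀pos hρmem.1, hρeq⟩
  refine ⟨?_, hmono, ?_⟩
  · intro s hs
    obtain ⟨ρ, hρpos, hρeq⟩ := hex s hs
    refine ⟨ρ, ⟨hρpos, hρeq.symm⟩, ?_⟩
    rintro σ ⟨hσpos, hσeq⟩
    exact hmono.injOn (Set.mem_Ioi.2 hσpos) (Set.mem_Ioi.2 hρpos) (by rw [← hσeq, hρeq])
  · refine ⟨fun ρ hρ => Set.mem_Ioi.2 (S_pos lam mu hlam hmu (Set.mem_Ioi.1 hρ)), hmono.injOn, ?_⟩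
    intro s hs
    obtain ⟨ρ, hρpos, hρeq⟩ := hex s (Set.mem_Ioi.1 hs)
    exact ⟨ρ, Set.mem_Ioi.2 hρpos, hρeq⟩
end

section
/- For integer K ≥ 1 and λ, μ > 0, the map s(ρ) = (λ/μ)ρ + Σ_{k=1}^K k ν_ρ(k) satisfies s(1) = λ/μ + K/2. Consequently, the fleet size minimizing the limiting proportion of problematic stations ψ(s) = φ(s^{-1}(s)) is s = K/2 + λ/μ, at which ψ equals 2/(K+1). -/
/-- Proportion of problematic stations at fixed-point load ρ. -/
noncomputable def phi (K : ℕ) (ρ : ℝ) : ℝ := nu K ρ 0 + nu K ρ K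

lemma gauss_sum_real (K : ℕ) : ∑ k ∈ Finset.Icc 1 K, (k : ℝ) = K * (K + 1) / 2 := by
  induction K with
  | zero => simp
  | succ n ih =>
    rw [Finset.sum_Icc_succ_top (by omega), ih]
    push_cast
    ring

lemma geom_pos (K : ℕ) {ρ : ℝ} (hρ : 0 < ρ) :
    0 < ∑ i ∈ Finset.range (K + 1), ρ ^ i :=
  Finset.sum_pos (fun i _ => pow_pos hρ i) (by simp)

lemma phi_eq (K : ℕ) {ρ : ℝ} (hρ : 0 < ρ) (h1 : ρ ≠ 1) :
    phi K ρ = (1 + ρ ^ K) / ∑ i ∈ Finset.range (K + 1), ρ ^ i := by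
  have hG := geom_pos K hρ
  have key : 1 - ρ ^ (K + 1) = (1 - ρ) * ∑ i ∈ Finset.range (K + 1), ρ ^ i := by
    have := geom_sum_mul ρ (K + 1)
    linarith [this]
  have hρ1 : 1 - ρ ≠ 0 := fun h => h1 (by linarith)
  simp only [phi, nu, if_neg h1, pow_zero, key]
  field_simp

lemma phi_ge (K : ℕ) {ρ : ℝ} (hρ : 0 < ρ) :
    2 / (K + 1) ≤ phi K ρ := by
  by_cases h1 : ρ = 1
  · subst h1
    simp [phi, nu, ← add_div]
    rw [div_eq_mul_inv, two_mul]
  · rw [phi_eq K hρ h1]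
    have hG := geom_pos K hρ
    have hK1 : (0 : ℝ) < (K : ℝ) + 1 := by positivity
    rw [div_le_div_iff₀ hK1 hG]
    have key : (1 + ρ ^ K) * (K + 1) - (∑ i ∈ Finset.range (K + 1), ρ ^ i) * 2
        = ∑ i ∈ Finset.range (K + 1), (1 - ρ ^ i) * (1 - ρ ^ (K - i)) := by
      have refl : ∑ i ∈ Finset.range (K + 1), ρ ^ (K - i)
          = ∑ i ∈ Finset.range (K + 1), ρ ^ i := by
        rw [← Finset.sum_range_reflect]
        apply Finset.sum_congr rfl
        intro i hi
        simp only [Finset.mem_range] at hi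
        congr 1
        omega
      have expand : ∀ i ∈ Finset.range (K + 1),
          (1 - ρ ^ i) * (1 - ρ ^ (K - i)) = 1 + ρ ^ K - ρ ^ i - ρ ^ (K - i) := by
        intro i hi
        simp only [Finset.mem_range] at hi
        have : ρ ^ i * ρ ^ (K - i) = ρ ^ K := by
          rw [← pow_add]; congr 1; omega
        nlinarith [this]
      rw [Finset.sum_congr rfl expand]
      simp [Finset.sum_sub_distrib, Finset.sum_add_distrib, refl]
      ring
    have nonneg : 0 ≤ ∑ i ∈ Finset.range (K + 1), (1 - ρ ^ i) * (1 - ρ ^ (K - i)) := by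
      apply Finset.sum_nonneg
      intro i _
      rcases le_or_gt ρ 1 with h | h
      · exact mul_nonneg (by nlinarith [pow_le_one₀ hρ.le h (n := i)])
          (by nlinarith [pow_le_one₀ hρ.le h (n := K - i)])
      · nlinarith [one_le_pow₀ h.le (n := i), one_le_pow₀ h.le (n := K - i)]
    linarith [key ▸ nonneg]

/-- The optimal fleet size is s = K/2 + λ/μ, reached at ρ = 1, where the proportion of
problematic stations attains its minimal value 2/(K+1). -/
theorem optimal_fleet_size (K : ℕ) (hK : 1 ≤ K) (lam mu : ℝ)
    (hlam : 0 < lam) (hmu : 0 < mu) :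
    S K lam mu 1 = K / 2 + lam / mu ∧
    phi K 1 = 2 / (K + 1) ∧
    ∀ ρ : ℝ, 0 < ρ → 2 / (K + 1) ≤ phi K ρ := by
  refine ⟨?_, ?_, fun ρ hρ => phi_ge K hρ⟩
  · have hK1 : (K : ℝ) + 1 ≠ 0 := by positivity
    have hnu : ∀ k, nu K (1 : ℝ) k = 1 / (K + 1) := fun k => by simp [nu]
    simp only [S, hnu, mul_one]
    rw [← Finset.sum_mul, gauss_sum_real]
    field_simp
    ring
  · simp [phi, nu]
    rw [div_eq_mul_inv, two_mul]
end

section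
/- Fix ρ > 0 and K ≥ 1. Define for each x ∈ [0,1] the sequence u_0(x) = 1, u_{k+1}(x) = ρ(u_k(x)² − 1) + x. Then there exists a unique increasing sequence x_1 < x_2 < ⋯ < x_{K+1} < ρ such that for each k, the map x ↦ u_k(x) is strictly increasing on [x_{k-1}, ρ] and u_k(x_k) = 0. Consequently, there is a unique x ∈ [0,1] with u_{K+1}(x) = 0 and u_k(x) ≥ 0 for all k ≤ K, i.e. the two-choice fixed-point equation has a unique solution for each ρ. -/
/-- The two-choice fixed-point recurrence: u_0(x) = 1, u_{k+1}(x) = ρ(u_k(x)² - 1) + x. -/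
noncomputable def u (ρ x : ℝ) : ℕ → ℝ
  | 0 => 1
  | k + 1 => ρ * ((u ρ x k) ^ 2 - 1) + x

lemma u_succ (ρ x : ℝ) (k : ℕ) : u ρ x (k + 1) = ρ * ((u ρ x k) ^ 2 - 1) + x := rfl

lemma u_zero (ρ x : ℝ) : u ρ x 0 = 1 := rfl

lemma u_cont (ρ : ℝ) (k : ℕ) : Continuous (fun x => u ρ x k) := by
  induction k with
  | zero => exact continuous_const
  | succ k ih =>
    simp only [u_succ]
    exact (continuous_const.mul ((ih.pow 2).sub continuous_const)).add continuous_id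

lemma u_at_one (ρ : ℝ) (k : ℕ) : u ρ 1 k = 1 := by
  induction k with
  | zero => rfl
  | succ k ih => simp [u_succ, ih]

/-- Invariant carried through the induction. -/
def TCInv (ρ : ℝ) (n : ℕ) (xs : ℕ → ℝ) : Prop :=
  xs 0 = 0 ∧ xs 1 = 0 ∧
  (∀ k, 1 ≤ k → k < n → xs k < xs (k + 1)) ∧
  (∀ k, 1 ≤ k → k ≤ n →
    0 ≤ xs k ∧ xs k < ρ ∧ xs k < 1 ∧ xs (k - 1) ≤ xs k ∧
    StrictMonoOn (fun x => u ρ x k) (Set.Icc (xs (k - 1)) ρ) ∧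
    u ρ (xs k) k = 0)

lemma tcinv_exists (ρ : ℝ) (hρ : 0 < ρ) : ∀ n, 1 ≤ n → ∃ xs, TCInv ρ n xs := by
  intro n hn
  induction n, hn using Nat.le_induction with
  | base =>
    refine ⟨fun _ => 0, rfl, rfl, by omega, ?_⟩
    intro k hk1 hk2
    have hk : k = 1 := le_antisymm hk2 hk1
    subst hk
    refine ⟨le_refl 0, hρ, one_pos, le_refl 0, ?_, by simp [u_succ, u_zero]⟩
    intro a _ b _ hab
    simpa [u_succ, u_zero] using hab
  | succ n hn ih =>
    obtain ⟨xs, h0, h1, hchain, hgood⟩ := ih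
    obtain ⟨hc0, hcρ, hc1, hcprev, hsm, hz⟩ := hgood n hn le_rfl
    set c := xs n with hc
    have memc : c ∈ Set.Icc (xs (n - 1)) ρ := ⟨hcprev, hcρ.le⟩
    have memρ : ρ ∈ Set.Icc (xs (n - 1)) ρ := ⟨hcprev.trans hcρ.le, le_rfl⟩
    -- nonnegativity of u_n on [c, ρ]
    have hnonneg : ∀ y ∈ Set.Icc c ρ, 0 ≤ u ρ y n := by
      intro y hy
      have hy' : y ∈ Set.Icc (xs (n - 1)) ρ := ⟨hcprev.trans hy.1, hy.2⟩
      have h := hsm.monotoneOn memc hy' hy.1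
      simpa [hz] using h
    -- strict monotonicity of u_{n+1} on [c, ρ]
    have smono' : StrictMonoOn (fun x => u ρ x (n + 1)) (Set.Icc c ρ) := by
      intro a ha b hb hab
      have ha' : a ∈ Set.Icc (xs (n - 1)) ρ := ⟨hcprev.trans ha.1, ha.2⟩
      have hb' : b ∈ Set.Icc (xs (n - 1)) ρ := ⟨hcprev.trans hb.1, hb.2⟩
      have h0a : 0 ≤ u ρ a n := hnonneg a ha
      have hlt : u ρ a n < u ρ b n := hsm ha' hb' hab
      show ρ * ((u ρ a n) ^ 2 - 1) + a < ρ * ((u ρ b n) ^ 2 - 1) + b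
      nlinarith [mul_pos hρ (mul_pos (sub_pos.mpr hlt) (by linarith : (0:ℝ) < u ρ a n + u ρ b n))]
    -- endpoint values
    have hfc : u ρ c (n + 1) = c - ρ := by rw [u_succ, hz]; ring
    have huρn : 0 < u ρ ρ n := by
      have h := hsm memc memρ hcρ
      simpa [hz] using h
    have hfρ : 0 < u ρ ρ (n + 1) := by
      rw [u_succ]
      nlinarith [mul_pos hρ (mul_pos huρn huρn)]
    -- IVT
    have hsub := intermediate_value_Icc hcρ.le ((u_cont ρ (n + 1)).continuousOn)
    have h0mem : (0 : ℝ) ∈ Set.Icc (u ρ c (n + 1)) (u ρ ρ (n + 1)) :=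
      ⟨by rw [hfc]; linarith, hfρ.le⟩
    obtain ⟨d, hd, hfd⟩ := hsub h0mem
    have hfd : u ρ d (n + 1) = 0 := hfd
    have hcd : c < d := by
      rcases eq_or_lt_of_le hd.1 with h | h
      · exfalso; rw [← h, hfc] at hfd; linarith
      · exact h
    have hdρ : d < ρ := by
      rcases eq_or_lt_of_le hd.2 with h | h
      · exfalso; rw [h] at hfd; linarith
      · exact h
    have hd1 : d < 1 := by
      by_cases hρ1 : ρ < 1
      · linarith
      · push_neg at hρ1
        by_contra h; push_neg at h
        have h1mem : (1 : ℝ) ∈ Set.Icc c ρ := ⟨hc1.le, hρ1⟩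
        have hmono := smono'.monotoneOn h1mem hd h
        have : u ρ 1 (n + 1) ≤ u ρ d (n + 1) := hmono
        rw [u_at_one, hfd] at this
        linarith
    have hd0 : 0 ≤ d := hc0.trans hcd.le
    -- new sequence
    refine ⟨fun k => if k = n + 1 then d else xs k, ?_, ?_, ?_, ?_⟩
    · simp only [if_neg (by omega : (0:ℕ) ≠ n + 1)]; exact h0
    · simp only [if_neg (by omega : (1:ℕ) ≠ n + 1)]; exact h1
    · intro k hk1 hk2
      rcases lt_or_eq_of_le (Nat.lt_succ_iff.mp hk2) with h | h
      · simp only [if_neg (by omega : k ≠ n + 1), if_neg (by omega : k + 1 ≠ n + 1)]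
        exact hchain k hk1 h
      · subst h
        simp only [if_neg (by omega : k ≠ k + 1), if_pos rfl]
        exact hcd
    · intro k hk1 hk2
      rcases Nat.lt_succ_iff_lt_or_eq.mp (Nat.lt_succ_of_le hk2) with h | h
      · have hkn : k ≤ n := Nat.lt_succ_iff.mp h
        simp only [if_neg (by omega : k ≠ n + 1), if_neg (by omega : k - 1 ≠ n + 1)]
        exact hgood k hk1 hkn
      · subst h
        have e1 : (if n + 1 = n + 1 then d else xs (n + 1)) = d := if_pos rfl
        have e2 : (if n = n + 1 then d else xs n) = xs n := if_neg (by omega)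
        simp only [Nat.add_sub_cancel, e1, e2]
        exact ⟨hd0, hdρ, hd1, hcd.le, smono', hfd⟩

/-- There is an increasing sequence x_1 < ⋯ < x_{K+1} < ρ such that x ↦ u_k(x) is strictly
increasing on [x_{k-1}, ρ] with unique zero x_k; consequently the two-choice fixed-point
equation has a unique solution. (Here x_0 is taken equal to x_1.) -/
theorem two_choice_fixed_point_unique (K : ℕ) (hK : 1 ≤ K) (ρ : ℝ) (hρ : 0 < ρ) :
    (∃ xs : ℕ → ℝ, xs 0 = xs 1 ∧ StrictMonoOn xs (Set.Icc 1 (K + 1)) ∧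
      ∀ k, 1 ≤ k → k ≤ K + 1 →
        xs k < ρ ∧
        StrictMonoOn (fun x => u ρ x k) (Set.Icc (xs (k - 1)) ρ) ∧
        u ρ (xs k) k = 0 ∧
        ∀ y ∈ Set.Icc (xs (k - 1)) ρ, u ρ y k = 0 → y = xs k) ∧
    (∃! x : ℝ, x ∈ Set.Icc (0 : ℝ) 1 ∧ u ρ x (K + 1) = 0 ∧
      ∀ k ≤ K, 0 ≤ u ρ x k) := by
  obtain ⟨xs, h0, h1, hchain, hgood⟩ := tcinv_exists ρ hρ (K + 1) (by omega)
  -- global strict monotonicity of the xs chain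
  have key : ∀ a b : ℕ, 1 ≤ a → a < b → b ≤ K + 1 → xs a < xs b := by
    intro a b
    induction b with
    | zero => omega
    | succ m ihm =>
      intro ha hab hbK
      rcases Nat.lt_succ_iff_lt_or_eq.mp hab with h | h
      · exact (ihm ha h (by omega)).trans (hchain m (by omega) (by omega))
      · subst h
        exact hchain a ha (by omega)
  constructor
  · refine ⟨xs, by rw [h0, h1], ?_, ?_⟩
    · intro a ha b hb hab
      simp only [Set.mem_Icc] at ha hb
      exact key a b ha.1 hab hb.2
    · intro k hk1 hk2
      obtain ⟨hk0, hkρ, hk1', hkprev, hsm, hz⟩ := hgood k hk1 hk2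
      refine ⟨hkρ, hsm, hz, ?_⟩
      intro y hy hy0
      have hxkmem : xs k ∈ Set.Icc (xs (k - 1)) ρ := ⟨hkprev, hkρ.le⟩
      exact hsm.injOn hy hxkmem (by show u ρ y k = u ρ (xs k) k; rw [hy0, hz])
  · obtain ⟨hK0, hKρ, hK1, hKprev, hKsm, hKz⟩ := hgood (K + 1) (by omega) le_rfl
    simp only [Nat.add_sub_cancel] at hKprev hKsm
    refine ⟨xs (K + 1), ⟨⟨hK0, hK1.le⟩, hKz, ?_⟩, ?_⟩
    · intro k hk
      rcases Nat.eq_zero_or_pos k with hk0 | hk0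
      · subst hk0; rw [u_zero]; norm_num
      · obtain ⟨_, hkρ', _, hkprev', hsm', hz'⟩ := hgood k hk0 (by omega)
        have hlt : xs k < xs (K + 1) := key k (K + 1) hk0 (by omega) le_rfl
        have memk : xs k ∈ Set.Icc (xs (k - 1)) ρ := ⟨hkprev', hkρ'.le⟩
        have memK : xs (K + 1) ∈ Set.Icc (xs (k - 1)) ρ :=
          ⟨hkprev'.trans hlt.le, hKρ.le⟩
        have h := hsm'.monotoneOn memk memK hlt.le
        simpa [hz'] using h
    · rintro y ⟨⟨hy0, hy1⟩, hyz, hynn⟩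
      have hyρ : y ≤ ρ := by
        by_contra h; push_neg at h
        have hpos : 0 < u ρ y (K + 1) := by
          rw [u_succ]
          nlinarith [sq_nonneg (u ρ y K), mul_nonneg hρ.le (sq_nonneg (u ρ y K))]
        rw [hyz] at hpos; exact lt_irrefl 0 hpos
      have hstep : ∀ k, 1 ≤ k → k ≤ K → xs k ≤ y := by
        intro k
        induction k with
        | zero => omega
        | succ m ihm =>
          intro _ hmK
          rcases Nat.eq_zero_or_pos m with hm | hm
          · subst hm; rw [h1]; exact hy0
          · have hymge : xs m ≤ y := ihm hm (by omega)
            obtain ⟨_, hkρ', _, hkprev', hsm', hz'⟩ := hgood (m + 1) (by omega) (by omega)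
            simp only [Nat.add_sub_cancel] at hkprev' hsm'
            by_contra hlt; push_neg at hlt
            have hymem : y ∈ Set.Icc (xs m) ρ := ⟨hymge, hyρ⟩
            have hxmem : xs (m + 1) ∈ Set.Icc (xs m) ρ := ⟨hkprev', hkρ'.le⟩
            have h := hsm' hymem hxmem hlt
            rw [show (fun x => u ρ x (m + 1)) (xs (m + 1)) = u ρ (xs (m + 1)) (m + 1) from rfl,
              hz'] at h
            have := hynn (m + 1) (by omega)
            simp only at h
            linarith
      have hyK : xs K ≤ y := hstep K hK le_rfl
      have hxKmem : xs (K + 1) ∈ Set.Icc (xs K) ρ := ⟨hKprev, hKρ.le⟩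
      exact hKsm.injOn ⟨hyK, hyρ⟩ hxKmem
        (by show u ρ y (K + 1) = u ρ (xs (K + 1)) (K + 1); rw [hyz, hKz])
end

section
/- Let ρ ∈ (0,1], K ≥ 1, and let (ū_k)_{0 ≤ k ≤ K+1} satisfy ū_0 = 1, ū_{k+1} = ρ(ū_k² − 1) + ū_1 for 0 ≤ k ≤ K, ū_{K+1} = 0, and ū_k ≥ 0 for k ≤ K. Then ū_1 < ρ, and for all 1 ≤ k ≤ K, ū_k ≤ ū_1^{2^{k-1}}. -/
/-- Two-choice fixed point: ū_1 < ρ and ū_k ≤ ū_1^{2^{k-1}}. -/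
theorem two_choice_tail_bound (K : ℕ) (hK : 1 ≤ K) (ρ : ℝ) (hρ0 : 0 < ρ) (hρ1 : ρ ≤ 1)
    (u : ℕ → ℝ) (h0 : u 0 = 1)
    (hrec : ∀ k ≤ K, u (k + 1) = ρ * ((u k) ^ 2 - 1) + u 1)
    (hend : u (K + 1) = 0)
    (hnonneg : ∀ k ≤ K, 0 ≤ u k) :
    u 1 < ρ ∧ ∀ k, 1 ≤ k → k ≤ K → u k ≤ (u 1) ^ (2 ^ (k - 1)) := by
  have hu1 : u 1 < ρ := by
    by_contra h
    push_neg at h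
    have claim : ∀ k, k ≤ K + 1 → ρ ^ (2 ^ k - 1) ≤ u k := by
      intro k
      induction k with
      | zero => intro _; simp [h0]
      | succ k ih =>
        intro hk
        have hkK : k ≤ K := Nat.lt_succ_iff.mp hk
        have ihk := ih (le_trans hkK (Nat.le_succ K))
        have hunn : 0 ≤ u k := hnonneg k hkK
        have hpnn : (0:ℝ) ≤ ρ ^ (2 ^ k - 1) := le_of_lt (pow_pos hρ0 _)
        have hsq : (ρ ^ (2 ^ k - 1)) ^ 2 ≤ (u k) ^ 2 := by
          exact pow_le_pow_left₀ hpnn ihk 2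
        have hexp : 2 ^ (k + 1) - 1 = 2 * (2 ^ k - 1) + 1 := by
          have h1 : 1 ≤ 2 ^ k := Nat.one_le_two_pow
          have h2 : 2 ^ (k+1) = 2 * 2 ^ k := by ring
          omega
        have : ρ ^ (2 ^ (k+1) - 1) = ρ * (ρ ^ (2 ^ k - 1)) ^ 2 := by
          rw [hexp, pow_succ, pow_mul]
          ring
        rw [this, hrec k hkK]
        calc ρ * (ρ ^ (2 ^ k - 1)) ^ 2 ≤ ρ * (u k) ^ 2 := by
              exact mul_le_mul_of_nonneg_left hsq (le_of_lt hρ0)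
          _ = ρ * ((u k) ^ 2 - 1) + ρ := by ring
          _ ≤ ρ * ((u k) ^ 2 - 1) + u 1 := by linarith
    have := claim (K + 1) le_rfl
    rw [hend] at this
    exact absurd this (not_le.mpr (pow_pos hρ0 _))
  refine ⟨hu1, ?_⟩
  have hu1nn : 0 ≤ u 1 := hnonneg 1 hK
  intro k hk1 hkK
  induction k with
  | zero => omega
  | succ k ih =>
    rcases Nat.eq_or_lt_of_le hk1 with h1 | h1
    · simp [← h1]
    · have hk1' : 1 ≤ k := Nat.lt_succ_iff.mp h1
      have hkK' : k ≤ K := le_trans (Nat.le_succ k) hkK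
      have ihk := ih hk1' (le_trans (Nat.le_succ k) hkK)
      have hunn : 0 ≤ u k := hnonneg k hkK'
      have hsq : (u k) ^ 2 ≤ (u 1 ^ 2 ^ (k - 1)) ^ 2 :=
        pow_le_pow_left₀ hunn ihk 2
      have hexp : 2 ^ (k + 1 - 1) = 2 ^ (k - 1) * 2 := by
        have : k - 1 + 1 = k := by omega
        calc 2 ^ (k + 1 - 1) = 2 ^ k := by norm_num
          _ = 2 ^ (k - 1 + 1) := by rw [this]
          _ = 2 ^ (k - 1) * 2 := pow_succ 2 _
      have hrw : (u 1) ^ 2 ^ (k + 1 - 1) = (u 1 ^ 2 ^ (k - 1)) ^ 2 := by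
        rw [hexp, pow_mul]
      rw [hrw, hrec k hkK']
      have hsqnn : (0:ℝ) ≤ (u k) ^ 2 := sq_nonneg _
      calc ρ * ((u k) ^ 2 - 1) + u 1 = ρ * (u k) ^ 2 + (u 1 - ρ) := by ring
        _ ≤ ρ * (u k) ^ 2 := by linarith
        _ ≤ 1 * (u k) ^ 2 := mul_le_mul_of_nonneg_right hρ1 hsqnn
        _ = (u k) ^ 2 := by ring
        _ ≤ (u 1 ^ 2 ^ (k - 1)) ^ 2 := hsq
end

section
/- Let K ≥ 1, ρ ∈ (0,1], ε = ρ − ū_1 ≥ 0 where ū satisfies the two-choice fixed point recurrence with ū_{K+1} = 0 and ū_k ≤ ū_1^{2^{k-1}}. Then 0 ≤ ū_1^{2^K} + ū_1 − ρ, hence 0 ≤ exp(−2^K ε) − ε, and consequently ε ≤ K·2^{−K}. -/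
/-- If ε = ρ - ū_1 ≥ 0 for the two-choice fixed point, then
0 ≤ ū_1^{2^K} + ū_1 - ρ, hence 0 ≤ exp(-2^K ε) - ε, and consequently ε ≤ K 2^{-K}. -/
theorem two_choice_epsilon_bound (K : ℕ) (hK : 1 ≤ K) (ρ : ℝ) (hρ0 : 0 < ρ) (hρ1 : ρ ≤ 1)
    (u : ℕ → ℝ) (h0 : u 0 = 1)
    (hrec : ∀ k ≤ K, u (k + 1) = ρ * ((u k) ^ 2 - 1) + u 1)
    (hend : u (K + 1) = 0)
    (hnonneg : ∀ k ≤ K, 0 ≤ u k)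
    (hdom : ∀ k, 1 ≤ k → k ≤ K → u k ≤ (u 1) ^ (2 ^ (k - 1)))
    (ε : ℝ) (hε : ε = ρ - u 1) (hεpos : 0 ≤ ε) :
    0 ≤ (u 1) ^ (2 ^ K) + u 1 - ρ ∧
    0 ≤ Real.exp (-(2 ^ K * ε)) - ε ∧
    ε ≤ K / 2 ^ K := by
  have hu1nn : 0 ≤ u 1 := hnonneg 1 hK
  have hu1le : u 1 ≤ ρ := by linarith [hεpos, hε.le]
  have hεle1 : ε ≤ 1 := by linarith
  have hKrec := hrec K le_rfl
  rw [hend] at hKrec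
  have huK : 0 ≤ u K := hnonneg K le_rfl
  have huKle : u K ≤ (u 1) ^ (2 ^ (K - 1)) := hdom K hK le_rfl
  have hsq : (u K) ^ 2 ≤ ((u 1) ^ (2 ^ (K - 1))) ^ 2 := pow_le_pow_left₀ huK huKle 2
  have hpow : ((u 1) ^ (2 ^ (K - 1))) ^ 2 = (u 1) ^ (2 ^ K) := by
    rw [← pow_mul]
    congr 1
    have hK' : K - 1 + 1 = K := Nat.succ_pred_eq_of_pos hK
    calc 2 ^ (K - 1) * 2 = 2 ^ (K - 1 + 1) := (pow_succ 2 (K - 1)).symm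
      _ = 2 ^ K := by rw [hK']
  have hpart1 : 0 ≤ (u 1) ^ (2 ^ K) + u 1 - ρ := by
    have hρuK : ρ * (u K) ^ 2 ≤ (u K) ^ 2 := by nlinarith [sq_nonneg (u K)]
    nlinarith
  refine ⟨hpart1, ?_, ?_⟩
  · have hεle : ε ≤ (u 1) ^ (2 ^ K) := by linarith
    have hle : u 1 ≤ Real.exp (-ε) := by
      have := Real.add_one_le_exp (-ε)
      linarith
    have hpowle : (u 1) ^ (2 ^ K) ≤ (Real.exp (-ε)) ^ (2 ^ K) :=
      pow_le_pow_left₀ hu1nn hle _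
    have hexp : (Real.exp (-ε)) ^ (2 ^ K) = Real.exp (-(2 ^ K * ε)) := by
      rw [← Real.exp_nat_mul]
      push_cast
      ring_nf
    linarith [hexp ▸ hpowle]
  · have hεle : ε ≤ (u 1) ^ (2 ^ K) := by linarith
    have hle : u 1 ≤ Real.exp (-ε) := by
      have := Real.add_one_le_exp (-ε)
      linarith
    have hpowle : (u 1) ^ (2 ^ K) ≤ (Real.exp (-ε)) ^ (2 ^ K) :=
      pow_le_pow_left₀ hu1nn hle _
    have hexp : (Real.exp (-ε)) ^ (2 ^ K) = Real.exp (-((2:ℝ) ^ K * ε)) := by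
      rw [← Real.exp_nat_mul]
      push_cast
      ring_nf
    have hεexp : ε ≤ Real.exp (-((2:ℝ) ^ K * ε)) := by
      linarith [hexp ▸ hpowle]
    by_contra hcon
    push_neg at hcon
    have h2pos : (0:ℝ) < 2 ^ K := by positivity
    have hKε : (K:ℝ) ≤ 2 ^ K * ε := by
      rw [div_lt_iff₀ h2pos] at hcon
      nlinarith
    have hmono : Real.exp (-((2:ℝ) ^ K * ε)) ≤ Real.exp (-(K:ℝ)) :=
      Real.exp_le_exp.mpr (by linarith)
    have h2e : (2:ℝ) ^ K ≤ Real.exp K := by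
      calc (2:ℝ) ^ K ≤ (Real.exp 1) ^ K := by
            apply pow_le_pow_left₀ (by norm_num)
            have := Real.exp_one_gt_d9; linarith
        _ = Real.exp K := by rw [← Real.exp_nat_mul, mul_one]
    have hexpK : Real.exp (-(K:ℝ)) ≤ (K:ℝ) / 2 ^ K := by
      rw [Real.exp_neg]
      rw [inv_le_iff_one_le_mul₀ (Real.exp_pos _)] at *
      · rw [div_mul_eq_mul_div, le_div_iff₀ h2pos]
        have hK1 : (1:ℝ) ≤ (K:ℝ) := by exact_mod_cast hK
        nlinarith [Real.exp_pos (K:ℝ)]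
    linarith
end

section
/- Let K ≥ 1, ρ ∈ [1 − 2^{−K/2}, 1], and let ū be the two-choice fixed point (ū_0 = 1, ū_{k+1} = ρ(ū_k² − 1) + ū_1, ū_{K+1} = 0, ū_k ≥ 0). Then the proportion of problematic stations ȳ_0 + ȳ_K = (1 − ū_1) + ū_K satisfies ȳ_0 + ȳ_K ≤ 2^{−K/2} + K·2^{−K} + sqrt(K·2^{−K}/(1 − 2^{−K/2})), which is at most 4·√K·2^{−K/2} for all K ≥ 1. -/
set_option maxHeartbeats 1000000


/-- For ρ ∈ [1 - 2^{-K/2}, 1], the two-choice fixed point has proportion of problematic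
stations (1 - ū_1) + ū_K ≤ 2^{-K/2} + K 2^{-K} + √(K 2^{-K}/(1 - 2^{-K/2})) ≤ 4 √K 2^{-K/2}. -/
theorem two_choice_problematic_bound (K : ℕ) (hK : 1 ≤ K) (ρ : ℝ)
    (hρl : 1 - (2 : ℝ) ^ (-(K : ℝ) / 2) ≤ ρ) (hρu : ρ ≤ 1)
    (u : ℕ → ℝ) (h0 : u 0 = 1)
    (hrec : ∀ k ≤ K, u (k + 1) = ρ * ((u k) ^ 2 - 1) + u 1)
    (hend : u (K + 1) = 0)
    (hnonneg : ∀ k ≤ K, 0 ≤ u k) :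
    (1 - u 1) + u K ≤
      (2 : ℝ) ^ (-(K : ℝ) / 2) + K / 2 ^ K +
        Real.sqrt ((K / 2 ^ K) / (1 - (2 : ℝ) ^ (-(K : ℝ) / 2))) ∧
    (2 : ℝ) ^ (-(K : ℝ) / 2) + K / 2 ^ K +
        Real.sqrt ((K / 2 ^ K) / (1 - (2 : ℝ) ^ (-(K : ℝ) / 2)))
      ≤ 4 * Real.sqrt K * (2 : ℝ) ^ (-(K : ℝ) / 2) := by
  set a : ℝ := (2 : ℝ) ^ (-(K : ℝ) / 2) with ha
  have ha0 : 0 < a := Real.rpow_pos_of_pos (by norm_num) _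
  have h2K0 : (0:ℝ) < 2 ^ K := by positivity
  have ha2 : a ^ 2 = ((2:ℝ) ^ K)⁻¹ := by
    rw [ha, ← Real.rpow_natCast ((2:ℝ) ^ (-(K : ℝ) / 2)) 2,
      ← Real.rpow_mul (by norm_num : (0:ℝ) ≤ 2)]
    push_cast
    rw [div_mul_cancel₀ _ (by norm_num : (2:ℝ) ≠ 0), Real.rpow_neg (by norm_num),
      Real.rpow_natCast]
  have has : a = Real.sqrt (((2:ℝ) ^ K)⁻¹) := by
    rw [← ha2, Real.sqrt_sq ha0.le]
  -- numeric bound on a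
  have h2Kge : (2:ℝ) ≤ 2 ^ K := by
    calc (2:ℝ) = 2 ^ 1 := by norm_num
    _ ≤ 2 ^ K := pow_le_pow_right₀ (by norm_num) hK
  have ha7072 : a ≤ 0.7072 := by
    rw [has]
    have h1 : ((2:ℝ) ^ K)⁻¹ ≤ 1/2 := by
      rw [inv_le_comm₀ (by positivity) (by norm_num)]
      linarith
    calc Real.sqrt (((2:ℝ) ^ K)⁻¹) ≤ Real.sqrt (1/2) := Real.sqrt_le_sqrt h1
    _ ≤ 0.7072 := by
        rw [show (0.7072:ℝ) = Real.sqrt (0.7072 ^ 2) from (Real.sqrt_sq (by norm_num)).symm]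
        exact Real.sqrt_le_sqrt (by norm_num)
  have h1a : (0:ℝ) < 1 - a := by linarith
  have hρ0 : (0:ℝ) < ρ := by linarith
  -- ε facts
  set ε : ℝ := ρ - u 1 with hεdef
  have huk : ρ * (u K) ^ 2 = ε := by
    have h := hrec K le_rfl
    rw [hend] at h
    rw [hεdef]; nlinarith [h]
  have hε0 : 0 ≤ ε := by nlinarith [sq_nonneg (u K)]
  have hu1 : 0 ≤ u 1 := hnonneg 1 hK
  have hu1le : u 1 ≤ 1 - ε := by rw [hεdef]; linarith
  have h1ε : 0 ≤ 1 - ε := le_trans hu1 hu1le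
  -- induction: u (j+1) ≤ (u 1)^(2^j)
  have claim : ∀ j, j + 1 ≤ K → u (j + 1) ≤ (u 1) ^ (2 ^ j) := by
    intro j
    induction j with
    | zero => intro _; simp
    | succ n ih =>
      intro hn
      have h1 : n + 1 ≤ K := by omega
      have e := hrec (n + 1) h1
      have hun : 0 ≤ u (n + 1) := hnonneg _ h1
      have hle := ih (by omega)
      have hsq : (u (n + 1)) ^ 2 ≤ ((u 1) ^ (2 ^ n)) ^ 2 := pow_le_pow_left₀ hun hle 2
      calc u (n + 1 + 1) = ρ * (u (n + 1)) ^ 2 - ε := by rw [e, hεdef]; ring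
      _ ≤ (u (n + 1)) ^ 2 := by nlinarith [sq_nonneg (u (n + 1))]
      _ ≤ ((u 1) ^ (2 ^ n)) ^ 2 := hsq
      _ = (u 1) ^ (2 ^ (n + 1)) := by rw [← pow_mul, pow_succ]
  -- ε ≤ (1-ε)^(2^K)
  have hεpow : ε ≤ (1 - ε) ^ (2 ^ K) := by
    have hm : K - 1 + 1 = K := Nat.succ_pred_eq_of_pos hK
    have hKb : u K ≤ (u 1) ^ (2 ^ (K - 1)) := by
      have := claim (K - 1) (by omega)
      rwa [hm] at this
    have hsq : (u K) ^ 2 ≤ ((u 1) ^ (2 ^ (K - 1))) ^ 2 :=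
      pow_le_pow_left₀ (hnonneg K le_rfl) hKb 2
    have heq : ((u 1) ^ (2 ^ (K - 1))) ^ 2 = (u 1) ^ (2 ^ K) := by
      rw [← pow_mul, ← pow_succ, hm]
    have h3 : (u 1) ^ (2 ^ K) ≤ (1 - ε) ^ (2 ^ K) := pow_le_pow_left₀ hu1 hu1le _
    nlinarith [sq_nonneg (u K)]
  -- ε ≤ K / 2^K
  have h12K : ((2:ℝ))⁻¹ ^ K ≤ (K:ℝ) / 2 ^ K := by
    rw [inv_pow, inv_eq_one_div, div_le_div_iff₀ h2K0 h2K0]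
    have : (1:ℝ) ≤ (K:ℝ) := by exact_mod_cast hK
    nlinarith
  have hεK : ε ≤ (K:ℝ) / 2 ^ K := by
    by_contra hcon
    push_neg at hcon
    have he1 : (1:ℝ) - ε ≤ Real.exp (-ε) := by linarith [Real.add_one_le_exp (-ε)]
    have he2 : (1 - ε) ^ (2 ^ K) ≤ Real.exp (-ε) ^ (2 ^ K) := pow_le_pow_left₀ h1ε he1 _
    have he3 : Real.exp (-ε) ^ (2 ^ K) = Real.exp (-(ε * 2 ^ K)) := by
      rw [← Real.exp_nat_mul]
      push_cast
      ring_nf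
    have hKε : (K:ℝ) < ε * 2 ^ K := by
      rw [div_lt_iff₀ h2K0] at hcon
      linarith
    have he4 : Real.exp (-(ε * 2 ^ K)) ≤ Real.exp (-(K:ℝ)) :=
      Real.exp_le_exp.2 (by linarith)
    have he5 : Real.exp (-(K:ℝ)) ≤ ((2:ℝ))⁻¹ ^ K := by
      have h1 : Real.exp (-(K:ℝ)) = Real.exp (-1) ^ K := by
        rw [← Real.exp_nat_mul]; ring_nf
      have h2 : Real.exp (-1) ≤ (2:ℝ)⁻¹ := by
        rw [Real.exp_neg]
        rw [inv_le_inv₀ (Real.exp_pos 1) (by norm_num)]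
        linarith [Real.add_one_le_exp (1:ℝ)]
      rw [h1]
      exact pow_le_pow_left₀ (Real.exp_pos _).le h2 K
    have hK1 : ((2:ℝ))⁻¹ ^ K ≤ (K:ℝ) / 2 ^ K := h12K
    linarith
  -- Part 1
  have huKnn : 0 ≤ u K := hnonneg K le_rfl
  have huK2 : (u K) ^ 2 ≤ ((K:ℝ) / 2 ^ K) / (1 - a) := by
    rw [le_div_iff₀ h1a]
    nlinarith [sq_nonneg (u K)]
  have huKs : u K ≤ Real.sqrt (((K:ℝ) / 2 ^ K) / (1 - a)) := by
    calc u K = Real.sqrt ((u K) ^ 2) := (Real.sqrt_sq huKnn).symm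
    _ ≤ _ := Real.sqrt_le_sqrt huK2
  have part1 : (1 - u 1) + u K ≤ a + (K:ℝ) / 2 ^ K +
      Real.sqrt (((K:ℝ) / 2 ^ K) / (1 - a)) := by
    have h1 : 1 - u 1 = (1 - ρ) + ε := by rw [hεdef]; ring
    have h2 : 1 - ρ ≤ a := by linarith
    linarith only [h1, h2, hεK, huKs]
  -- Part 2
  set s := Real.sqrt (K:ℝ) with hs
  have hs1 : 1 ≤ s := by
    rw [hs, show (1:ℝ) = Real.sqrt 1 from Real.sqrt_one.symm]
    exact Real.sqrt_le_sqrt (by exact_mod_cast hK)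
  have hbnn : (0:ℝ) ≤ (K:ℝ) / 2 ^ K := by positivity
  have hsa : s * a = Real.sqrt ((K:ℝ) / 2 ^ K) := by
    rw [hs, has, ← Real.sqrt_mul (Nat.cast_nonneg K)]
    rw [div_eq_mul_inv]
  have hsann : 0 ≤ s * a := by positivity
  have hb12 : (K:ℝ) / 2 ^ K ≤ 1 / 2 := by
    rw [div_le_div_iff₀ h2K0 (by norm_num : (0:ℝ) < 2)]
    have hnat : 2 * K ≤ 2 ^ K := by
      have h1 : K - 1 < 2 ^ (K - 1) := Nat.lt_two_pow_self
      have h2 : K ≤ 2 ^ (K - 1) := by omega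
      calc 2 * K ≤ 2 * 2 ^ (K - 1) := by omega
      _ = 2 ^ (K - 1 + 1) := (pow_succ' 2 _).symm
      _ = 2 ^ K := by congr 1; omega
    calc (K:ℝ) * 2 = ((2 * K : ℕ) : ℝ) := by push_cast; ring
    _ ≤ ((2 ^ K : ℕ) : ℝ) := by exact_mod_cast hnat
    _ = 1 * 2 ^ K := by push_cast; ring
  have hsb : Real.sqrt ((K:ℝ) / 2 ^ K) ≤ 0.7072 := by
    calc Real.sqrt ((K:ℝ) / 2 ^ K) ≤ Real.sqrt (1/2) := Real.sqrt_le_sqrt hb12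
    _ ≤ 0.7072 := by
        rw [show (0.7072:ℝ) = Real.sqrt (0.7072 ^ 2) from (Real.sqrt_sq (by norm_num)).symm]
        exact Real.sqrt_le_sqrt (by norm_num)
  -- term 1
  have ht1 : a ≤ s * a := le_mul_of_one_le_left ha0.le hs1
  -- term 2
  have ht2 : (K:ℝ) / 2 ^ K ≤ 0.7072 * (s * a) := by
    rw [hsa]
    nlinarith [Real.sq_sqrt hbnn, Real.sqrt_nonneg ((K:ℝ) / 2 ^ K)]
  -- term 3
  have hdiv : ((K:ℝ) / 2 ^ K) / (1 - a) ≤ 3.42 * ((K:ℝ) / 2 ^ K) := by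
    rw [div_le_iff₀ h1a]
    nlinarith
  have ht3 : Real.sqrt (((K:ℝ) / 2 ^ K) / (1 - a)) ≤ 1.85 * (s * a) := by
    calc Real.sqrt (((K:ℝ) / 2 ^ K) / (1 - a))
        ≤ Real.sqrt (3.42 * ((K:ℝ) / 2 ^ K)) := Real.sqrt_le_sqrt hdiv
    _ = Real.sqrt 3.42 * Real.sqrt ((K:ℝ) / 2 ^ K) := Real.sqrt_mul (by norm_num) _
    _ ≤ 1.85 * (s * a) := by
        rw [hsa]
        have h1 : Real.sqrt 3.42 ≤ 1.85 := by
          rw [show (1.85:ℝ) = Real.sqrt (1.85 ^ 2) from (Real.sqrt_sq (by norm_num)).symm]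
          exact Real.sqrt_le_sqrt (by norm_num)
        exact mul_le_mul_of_nonneg_right h1 (Real.sqrt_nonneg _)
  have part2 : a + (K:ℝ) / 2 ^ K + Real.sqrt (((K:ℝ) / 2 ^ K) / (1 - a))
      ≤ 4 * s * a := by
    have : 4 * s * a = 4 * (s * a) := by ring
    rw [this]
    linarith only [ht1, ht2, ht3, hsann]
  exact ⟨part1, part2⟩
end

section
/- Let K ≥ 1 and ρ = 1 − 2^{−K/2}, and let ū be the two-choice fixed point for this ρ. Then Σ_{k=1}^K ū_k ≤ Σ_{k=1}^K exp(−2^{k−1−K/2}) < K/2. Consequently, since s = Σ_{k=1}^K ū_k + ρλ/μ is increasing in ρ, any fleet size s ≥ K/2 + λ/μ forces the fixed-point load to satisfy ρ ≥ 1 − 2^{−K/2}. -/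
open Real Finset

lemma cubic_le_exp {t : ℝ} (ht : 0 ≤ t) : 1 + t + t^2/2 + t^3/6 ≤ Real.exp t := by
  have h := Real.sum_le_exp_of_nonneg ht 4
  simp [Finset.sum_range_succ, Nat.factorial] at h
  linarith

lemma exp_neg_le {t : ℝ} (ht : 0 < t) :
    Real.exp (-t) ≤ (1 + t + t^2/2 + t^3/6)⁻¹ := by
  rw [Real.exp_neg]
  have hP : 0 < 1 + t + t^2/2 + t^3/6 := by positivity
  exact inv_anti₀ hP (cubic_le_exp ht.le)

lemma pair_core {t : ℝ} (ht : 0 < t) (ht2 : 2 * t^2 ≤ 1) :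
    Real.exp (-t) + Real.exp (-(1/(2*t))) < 1 := by
  set s : ℝ := 1/(2*t) with hs
  have hspos : 0 < s := by positivity
  have h1 := exp_neg_le ht
  have h2 := exp_neg_le hspos
  have hPt : 0 < 1 + t + t^2/2 + t^3/6 := by positivity
  have hPs : 0 < 1 + s + s^2/2 + s^3/6 := by positivity
  have hr : 0 < 24*t^4 + 78*t^3 - 125*t^2 + 39*t + 6 := by
    nlinarith [mul_pos ht ht, mul_pos (mul_pos ht ht) ht, sq_nonneg (t - 1/2),
      sq_nonneg (2*t^2 - t), mul_nonneg (mul_nonneg ht.le ht.le) (sub_nonneg.2 ht2),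
      mul_nonneg ht.le (sub_nonneg.2 ht2)]
  have hid : ((1 + t + t^2/2 + t^3/6) * (1 + s + s^2/2 + s^3/6)
      - ((1 + t + t^2/2 + t^3/6) + (1 + s + s^2/2 + s^3/6))) * (288*t^3)
      = t * (24*t^4 + 78*t^3 - 125*t^2 + 39*t + 6) := by
    rw [hs]
    have ht' : t ≠ 0 := ht.ne'
    field_simp
    ring
  have hlt : (1 + t + t^2/2 + t^3/6) + (1 + s + s^2/2 + s^3/6) <
      (1 + t + t^2/2 + t^3/6) * (1 + s + s^2/2 + s^3/6) := by
    nlinarith [mul_pos ht hr, mul_pos (mul_pos ht (mul_pos ht ht)) (mul_pos ht hr)]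
  have key : (1 + t + t^2/2 + t^3/6)⁻¹ + (1 + s + s^2/2 + s^3/6)⁻¹ < 1 := by
    rw [inv_add_inv hPt.ne' hPs.ne', div_lt_one (by positivity)]
    linarith
  linarith

lemma pair_lt {t : ℝ} (ht : 0 < t) :
    Real.exp (-t) + Real.exp (-(1/(2*t))) < 1 := by
  rcases le_or_gt (2*t^2) 1 with h | h
  · exact pair_core ht h
  · have hs : 0 < 1/(2*t) := by positivity
    have h2 : 2*(1/(2*t))^2 ≤ 1 := by
      have heq : 2*(1/(2*t))^2 = 1/(2*t^2) := by field_simp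
      rw [heq, div_le_one (by positivity)]; linarith
    have hmain := pair_core hs h2
    have he : 1/(2*(1/(2*t))) = t := by field_simp
    rw [he] at hmain; linarith

lemma sum_exp_lt (K : ℕ) (hK : 1 ≤ K) :
    ∑ k ∈ Finset.Icc 1 K, Real.exp (-(2:ℝ)^((k:ℝ)-1-(K:ℝ)/2)) < (K:ℝ)/2 := by
  set f : ℕ → ℝ := fun k => Real.exp (-(2:ℝ)^((k:ℝ)-1-(K:ℝ)/2)) with hf
  have hrefl : ∑ k ∈ Finset.Icc 1 K, f k = ∑ k ∈ Finset.Icc 1 K, f (K+1-k) := by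
    refine Finset.sum_nbij' (fun k => K+1-k) (fun k => K+1-k) ?_ ?_ ?_ ?_ ?_ <;>
        intro a ha <;> simp only [Finset.mem_Icc] at *
    · omega
    · omega
    · omega
    · omega
    · congr 1; omega
  have hpair : ∀ k ∈ Finset.Icc 1 K, f k + f (K+1-k) < 1 := by
    intro k hk
    rw [Finset.mem_Icc] at hk
    set t : ℝ := (2:ℝ)^((k:ℝ)-1-(K:ℝ)/2) with hT
    have ht : 0 < t := Real.rpow_pos_of_pos two_pos _
    have hc : ((K+1-k:ℕ):ℝ) = (K:ℝ)+1-(k:ℝ) := by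
      rw [Nat.cast_sub (by omega)]; push_cast; ring
    have hval : (2:ℝ)^((((K+1-k:ℕ)):ℝ)-1-(K:ℝ)/2) = 1/(2*t) := by
      rw [hc, show ((K:ℝ)+1-(k:ℝ)) - 1 - (K:ℝ)/2
          = (-1) + -(((k:ℝ)-1-(K:ℝ)/2)) by ring,
        Real.rpow_add two_pos, Real.rpow_neg (by norm_num : (0:ℝ) ≤ 2),
        Real.rpow_neg (by norm_num : (0:ℝ) ≤ 2), Real.rpow_one,
        hT, one_div, mul_inv]
    have h2 : f (K+1-k) = Real.exp (-(1/(2*t))) := by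
      simp only [hf]; rw [hval]
    rw [h2]
    exact pair_lt ht
  have hcard : (Finset.Icc 1 K).card = K := by rw [Nat.card_Icc]; omega
  have hsum2 : ∑ k ∈ Finset.Icc 1 K, (f k + f (K+1-k)) < ∑ k ∈ Finset.Icc 1 K, (1:ℝ) :=
    Finset.sum_lt_sum_of_nonempty (Finset.nonempty_Icc.2 hK) hpair
  rw [Finset.sum_add_distrib, ← hrefl, Finset.sum_const, hcard, nsmul_eq_mul, mul_one] at hsum2
  linarith

lemma u_le_exp (K : ℕ) (hK : 1 ≤ K) (ρ : ℝ) (hρ0 : 0 ≤ ρ)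
    (hρ1 : ρ ≤ 1 - (2:ℝ)^(-(K:ℝ)/2))
    (u : ℕ → ℝ) (hrec : ∀ k ≤ K, u (k+1) = ρ*((u k)^2 - 1) + u 1)
    (hend : u (K+1) = 0) (hnonneg : ∀ k ≤ K, 0 ≤ u k) :
    ∀ k, 1 ≤ k → k ≤ K → u k ≤ Real.exp (-(2:ℝ)^((k:ℝ)-1-(K:ℝ)/2)) := by
  have hδ : 0 < (2:ℝ)^(-(K:ℝ)/2) := Real.rpow_pos_of_pos two_pos _
  have hρlt1 : ρ < 1 := by linarith
  have hu1 : u 1 ≤ ρ := by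
    have h := hrec K le_rfl
    rw [hend] at h
    nlinarith [mul_nonneg hρ0 (sq_nonneg (u K))]
  have claim : ∀ k, 1 ≤ k → k ≤ K → u k ≤ ρ ^ (2^(k-1)) := by
    intro k
    induction k with
    | zero => omega
    | succ n ih =>
      intro _ hK'
      rcases Nat.eq_zero_or_pos n with h0 | hpos
      · subst h0; simpa using hu1
      · have hun := ih hpos (by omega)
        have hr := hrec n (by omega)
        have h1 : u (n+1) ≤ ρ * (u n)^2 := by rw [hr]; linarith
        have h2 : ρ * (u n)^2 ≤ (u n)^2 := by nlinarith [sq_nonneg (u n)]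
        have h3 : (u n)^2 ≤ (ρ ^ (2^(n-1)))^2 :=
          pow_le_pow_left₀ (hnonneg n (by omega)) hun 2
        have h4 : (ρ ^ (2^(n-1)))^2 = ρ ^ (2^n) := by
          rw [← pow_mul]
          congr 1
          rw [← pow_succ]
          congr 1
          omega
        have hidx : n + 1 - 1 = n := rfl
        rw [hidx]
        calc u (n+1) ≤ ρ * (u n)^2 := h1
          _ ≤ (u n)^2 := h2
          _ ≤ (ρ ^ (2^(n-1)))^2 := h3
          _ = ρ ^ (2^n) := h4
  intro k hk1 hkK
  have hρe : ρ ≤ Real.exp (-(2:ℝ)^(-(K:ℝ)/2)) := by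
    have := Real.add_one_le_exp (-(2:ℝ)^(-(K:ℝ)/2))
    linarith
  have hpow : ρ ^ (2^(k-1)) ≤ (Real.exp (-(2:ℝ)^(-(K:ℝ)/2))) ^ (2^(k-1)) :=
    pow_le_pow_left₀ hρ0 hρe _
  have hexp : (Real.exp (-(2:ℝ)^(-(K:ℝ)/2))) ^ (2^(k-1))
      = Real.exp (-(2:ℝ)^((k:ℝ)-1-(K:ℝ)/2)) := by
    rw [← Real.exp_nat_mul]
    congr 1
    have hcast : ((2^(k-1) : ℕ) : ℝ) = (2:ℝ)^((k:ℝ)-1) := by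
      push_cast
      rw [← Real.rpow_natCast 2 (k-1), Nat.cast_sub hk1]
      norm_num
    rw [hcast, show (k:ℝ)-1-(K:ℝ)/2 = ((k:ℝ)-1) + (-(K:ℝ)/2) by ring,
      Real.rpow_add two_pos]
    ring
  calc u k ≤ ρ ^ (2^(k-1)) := claim k hk1 hkK
    _ ≤ (Real.exp (-(2:ℝ)^(-(K:ℝ)/2))) ^ (2^(k-1)) := hpow
    _ = Real.exp (-(2:ℝ)^((k:ℝ)-1-(K:ℝ)/2)) := hexp

/-- At ρ = 1 - 2^{-K/2}, the two-choice fixed point satisfies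
Σ_{k=1}^K ū_k ≤ Σ_{k=1}^K exp(-2^{k-1-K/2}) < K/2; consequently (since
s = Σ ū_k + ρλ/μ is increasing in ρ) any fleet size s ≥ K/2 + λ/μ forces ρ ≥ 1 - 2^{-K/2}. -/
theorem two_choice_sum_bound (K : ℕ) (hK : 1 ≤ K) (lam mu : ℝ)
    (hlam : 0 < lam) (hmu : 0 < mu)
    (ρ : ℝ) (hρ : ρ = 1 - (2 : ℝ) ^ (-(K : ℝ) / 2))
    (u : ℕ → ℝ) (h0 : u 0 = 1)
    (hrec : ∀ k ≤ K, u (k + 1) = ρ * ((u k) ^ 2 - 1) + u 1)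
    (hend : u (K + 1) = 0)
    (hnonneg : ∀ k ≤ K, 0 ≤ u k) :
    (∑ k ∈ Finset.Icc 1 K, u k ≤
        ∑ k ∈ Finset.Icc 1 K, Real.exp (-(2 : ℝ) ^ ((k : ℝ) - 1 - (K : ℝ) / 2))) ∧
    (∑ k ∈ Finset.Icc 1 K, Real.exp (-(2 : ℝ) ^ ((k : ℝ) - 1 - (K : ℝ) / 2)) < K / 2) ∧
    (∀ ρ' : ℝ, 0 < ρ' → ρ' ≤ 1 →
      ∀ u' : ℕ → ℝ, u' 0 = 1 →
        (∀ k ≤ K, u' (k + 1) = ρ' * ((u' k) ^ 2 - 1) + u' 1) →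
        u' (K + 1) = 0 → (∀ k ≤ K, 0 ≤ u' k) →
        (K : ℝ) / 2 + lam / mu ≤ (∑ k ∈ Finset.Icc 1 K, u' k) + ρ' * lam / mu →
        1 - (2 : ℝ) ^ (-(K : ℝ) / 2) ≤ ρ') := by
  have hδ1 : (2:ℝ) ^ (-(K : ℝ) / 2) ≤ 1 := by
    apply Real.rpow_le_one_of_one_le_of_nonpos (by norm_num)
    have : (0:ℝ) ≤ (K:ℝ) := Nat.cast_nonneg K
    linarith
  have hρ0 : 0 ≤ ρ := by rw [hρ]; linarith
  have hsum := sum_exp_lt K hK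
  have hle : ∑ k ∈ Finset.Icc 1 K, u k ≤
      ∑ k ∈ Finset.Icc 1 K, Real.exp (-(2 : ℝ) ^ ((k : ℝ) - 1 - (K : ℝ) / 2)) := by
    apply Finset.sum_le_sum
    intro k hk
    rw [Finset.mem_Icc] at hk
    exact u_le_exp K hK ρ hρ0 (le_of_eq hρ) u hrec hend hnonneg k hk.1 hk.2
  refine ⟨hle, hsum, ?_⟩
  intro ρ' hρ'0 hρ'1 u' h0' hrec' hend' hnn' hs
  by_contra h
  push_neg at h
  have hle' : ∑ k ∈ Finset.Icc 1 K, u' k ≤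
      ∑ k ∈ Finset.Icc 1 K, Real.exp (-(2 : ℝ) ^ ((k : ℝ) - 1 - (K : ℝ) / 2)) := by
    apply Finset.sum_le_sum
    intro k hk
    rw [Finset.mem_Icc] at hk
    exact u_le_exp K hK ρ' hρ'0.le h.le u' hrec' hend' hnn' k hk.1 hk.2
  have hρlam : ρ' * lam / mu ≤ lam / mu := by
    gcongr
    nlinarith

  have : ρ' * lam / mu ≤ lam / mu := hρlam
  linarith
end

section
/- Let K ≥ 1 and ρ = 1, and let ū be the two-choice fixed point with ε = 1 − ū_1 ≤ K·2^{−K}. Then ū_k ≥ max(0, 1 − 2^k ε) for all k, and Σ_{k=1}^K ū_k ≥ K − log₂K − 3. -/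
/-- At ρ = 1, the two-choice fixed point with ε = 1 - ū_1 ≤ K 2^{-K} satisfies
ū_k ≥ max(0, 1 - 2^k ε) and Σ_{k=1}^K ū_k ≥ K - log₂ K - 3. -/
theorem two_choice_sum_lower_bound (K : ℕ) (hK : 1 ≤ K)
    (u : ℕ → ℝ) (h0 : u 0 = 1)
    (hrec : ∀ k ≤ K, u (k + 1) = 1 * ((u k) ^ 2 - 1) + u 1)
    (hend : u (K + 1) = 0)
    (hnonneg : ∀ k ≤ K, 0 ≤ u k)
    (ε : ℝ) (hε : ε = 1 - u 1) (hεle : ε ≤ K / 2 ^ K) :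
    (∀ k ≤ K + 1, max 0 (1 - 2 ^ k * ε) ≤ u k) ∧
    (K : ℝ) - Real.logb 2 K - 3 ≤ ∑ k ∈ Finset.Icc 1 K, u k := by
  have hu1 : u 1 = 1 - ε := by linarith
  have hrec' : ∀ k ≤ K, u (k+1) = (u k)^2 - ε := by
    intro k hk; rw [hrec k hk, hu1]; ring
  -- ε ≥ 0
  have hεnn : 0 ≤ ε := by
    by_contra h
    push_neg at h
    have key : ∀ k, k ≤ K → 1 ≤ u (k+1) := by
      intro k
      induction k with
      | zero => intro _; rw [hrec' 0 (by omega), h0]; nlinarith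
      | succ n ih =>
        intro hn
        have h1 := ih (by omega)
        rw [hrec' (n+1) hn]
        nlinarith
    have := key K le_rfl
    rw [hend] at this; linarith
  have hnonneg' : ∀ k ≤ K + 1, 0 ≤ u k := by
    intro k hk
    rcases Nat.lt_or_ge k (K+1) with h | h
    · exact hnonneg k (by omega)
    · have hk1 : k = K + 1 := by omega
      rw [hk1, hend]
  -- main induction
  have P : ∀ k, k ≤ K + 1 → 0 ≤ 1 - ((2:ℝ)^k - 1) * ε → 1 - ((2:ℝ)^k - 1) * ε ≤ u k := by
    intro k
    induction k with
    | zero => intro _ _; rw [h0]; norm_num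
    | succ n ih =>
      intro hn h1
      have hpow : (0:ℝ) < 2^n := by positivity
      have hexp : (2:ℝ)^(n+1) = 2 * 2^n := by ring
      have hmono : ((2:ℝ)^n - 1) * ε ≤ ((2:ℝ)^(n+1) - 1) * ε := by
        apply mul_le_mul_of_nonneg_right _ hεnn
        nlinarith
      have h0' : 0 ≤ 1 - ((2:ℝ)^n - 1) * ε := by linarith
      have hik := ih (by omega) h0'
      rw [hrec' n (by omega)]
      have hun : 0 ≤ u n := hnonneg' n (by omega)
      have hsq : (1 - ((2:ℝ)^n - 1) * ε)^2 ≤ (u n)^2 := by nlinarith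
      nlinarith [sq_nonneg (((2:ℝ)^n - 1) * ε)]
  have first : ∀ k ≤ K + 1, max 0 (1 - 2 ^ k * ε) ≤ u k := by
    intro k hk
    apply max_le (hnonneg' k hk)
    rcases le_or_gt (1 - (2:ℝ)^k * ε) 0 with h | h
    · exact h.trans (hnonneg' k hk)
    · have hp : (0:ℝ) ≤ 1 - ((2:ℝ)^k - 1) * ε := by nlinarith
      have := P k hk hp
      nlinarith
  refine ⟨first, ?_⟩
  set c := Nat.clog 2 K with hc
  have hcK : c ≤ K := (Nat.clog_le_iff_le_pow (by norm_num)).mpr (Nat.lt_two_pow_self (n := K)).le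
  have hKc : (K:ℝ) ≤ 2^c := by exact_mod_cast Nat.le_pow_clog (by norm_num) K
  set m := K - c with hm
  have hmK : m ≤ K := Nat.sub_le _ _
  have hmc : m + c = K := by omega
  have hmR : (m:ℝ) = (K:ℝ) - (c:ℝ) := by
    rw [hm]; exact Nat.cast_sub hcK
  -- clog vs logb
  have hclog : (c:ℝ) ≤ Real.logb 2 K + 1 := by
    rcases Nat.eq_zero_or_pos c with h | h
    · rw [h]
      have : (0:ℝ) ≤ Real.logb 2 K :=
        Real.logb_nonneg (by norm_num) (by exact_mod_cast hK)
      push_cast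
      linarith
    · have hK2 : 2 ≤ K := by
        by_contra hh
        push_neg at hh
        have hK1 : K = 1 := by omega
        have : c = 0 := by rw [hc, hK1]; exact Nat.clog_one_right 2
        omega
      have hlt : 2^(c-1) < K := Nat.pow_pred_clog_lt_self (by norm_num) hK2
      have hltR : (2:ℝ)^(c-1) < (K:ℝ) := by exact_mod_cast hlt
      have hlog : Real.logb 2 ((2:ℝ)^(c-1)) < Real.logb 2 K :=
        Real.logb_lt_logb (by norm_num) (by positivity) hltR
      rw [Real.logb_pow, Real.logb_self_eq_one (by norm_num)] at hlog
      have hcc : ((c-1 : ℕ):ℝ) = (c:ℝ) - 1 := by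
        exact_mod_cast Nat.cast_sub h
      rw [hcc] at hlog
      linarith
  -- geometric sum
  have geo : ∀ n : ℕ, ∑ k ∈ Finset.Icc 1 n, (2:ℝ)^k = 2^(n+1) - 2 := by
    intro n
    induction n with
    | zero => simp
    | succ n ih =>
      rw [Finset.sum_Icc_succ_top (by omega), ih]; ring
  have hsum : ∑ k ∈ Finset.Icc 1 m, ((1:ℝ) - 2^k * ε) = (m:ℝ) - ((2:ℝ)^(m+1) - 2) * ε := by
    rw [Finset.sum_sub_distrib, ← Finset.sum_mul, geo m]
    simp [Nat.card_Icc]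
  -- bound 2^(m+1) ε ≤ 2
  have hb : (2:ℝ)^(m+1) * ε ≤ 2 := by
    have h1 : (2:ℝ)^(m+1) * ε ≤ 2^(m+1) * ((K:ℝ) / 2^K) :=
      mul_le_mul_of_nonneg_left hεle (by positivity)
    have h2 : (2:ℝ)^K = 2^m * 2^c := by rw [← pow_add, hmc]
    have h3 : (2:ℝ)^(m+1) * ((K:ℝ) / 2^K) ≤ 2 := by
      rw [mul_div_assoc', div_le_iff₀ (by positivity : (0:ℝ) < 2^K)]
      have h4 : (0:ℝ) ≤ 2^m := by positivity
      have e1 : (2:ℝ)^(m+1) = 2*2^m := by ring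
      rw [e1, h2]
      nlinarith [mul_le_mul_of_nonneg_left hKc h4]
    linarith
  have s1 : ∑ k ∈ Finset.Icc 1 m, ((1:ℝ) - 2^k * ε) ≤ ∑ k ∈ Finset.Icc 1 m, u k := by
    apply Finset.sum_le_sum
    intro k hk
    have hk' : k ≤ K + 1 := by
      have := (Finset.mem_Icc.mp hk).2; omega
    exact le_trans (le_max_right _ _) (first k hk')
  have s2 : ∑ k ∈ Finset.Icc 1 m, u k ≤ ∑ k ∈ Finset.Icc 1 K, u k := by
    apply Finset.sum_le_sum_of_subset_of_nonneg (Finset.Icc_subset_Icc_right hmK)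
    intro k hk _
    exact hnonneg k (Finset.mem_Icc.mp hk).2
  calc (K : ℝ) - Real.logb 2 K - 3 ≤ (m:ℝ) - 2 := by rw [hmR]; linarith
    _ ≤ (m:ℝ) - ((2:ℝ)^(m+1) - 2) * ε := by nlinarith
    _ = ∑ k ∈ Finset.Icc 1 m, ((1:ℝ) - 2^k * ε) := hsum.symm
    _ ≤ ∑ k ∈ Finset.Icc 1 m, u k := s1
    _ ≤ ∑ k ∈ Finset.Icc 1 K, u k := s2
end

section
/- Under the two-choice rule with all users obeying, for station capacity K ≥ 1 and any fleet size s ∈ [K/2 + λ/μ, K − log₂K − 3 + λ/μ], the fixed-point load satisfies ρ ∈ [1 − 2^{−K/2}, 1], and hence the limiting proportion of problematic stations is at most 4√K · 2^{−K/2}. -/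
open Real Finset


open Real

lemma bern1' (x : ℝ) (hx0 : 0 ≤ x) (hx1 : x ≤ 1) (n : ℕ) :
    (1 + n * x) * (1 - x) ^ n ≤ 1 := by
  have h1 : 1 + (n:ℝ) * x ≤ (1 + x) ^ n := by
    have := one_add_mul_le_pow (by linarith : (-2:ℝ) ≤ x) n
    linarith
  calc (1 + (n:ℝ) * x) * (1 - x) ^ n ≤ (1+x)^n * (1-x)^n := by
        apply mul_le_mul_of_nonneg_right h1 (pow_nonneg (by linarith) n)
    _ = (1 - x^2)^n := by rw [← mul_pow]; ring_nf
    _ ≤ 1 := pow_le_one₀ (by nlinarith) (by nlinarith)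

lemma nnm1 (n : ℕ) : (0:ℝ) ≤ (n:ℝ) * ((n:ℝ) - 1) := by
  rcases Nat.eq_zero_or_pos n with h | h
  · simp [h]
  · have : (1:ℝ) ≤ n := by exact_mod_cast h
    nlinarith

lemma bern2aux (x : ℝ) (hx0 : 0 ≤ x) (n : ℕ) :
    1 + n * x + n * ((n:ℝ) - 1) / 2 * x ^ 2 ≤ (1 + x) ^ n := by
  induction n with
  | zero => norm_num
  | succ n ih =>
    have h2 : (1 + (n:ℝ) * x + n * ((n:ℝ) - 1) / 2 * x ^ 2) * (1 + x) ≤ (1+x)^n * (1+x) :=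
      mul_le_mul_of_nonneg_right ih (by linarith)
    have h3 : (0:ℝ) ≤ (n:ℝ) * ((n:ℝ)-1) / 2 * x^3 := by
      have := nnm1 n
      positivity
    have e : (1 + ((n:ℝ)+1) * x + ((n:ℝ)+1) * (((n:ℝ)+1) - 1) / 2 * x ^ 2)
        = (1 + n*x + n*((n:ℝ)-1)/2*x^2)*(1+x) - n*((n:ℝ)-1)/2*x^3 := by ring
    have goal' : 1 + ((n:ℝ)+1) * x + ((n:ℝ)+1) * (((n:ℝ)+1) - 1) / 2 * x ^ 2 ≤ (1+x)^(n+1) := by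
      rw [show (1+x)^(n+1) = (1+x)^n*(1+x) from pow_succ _ _, e]
      linarith
    push_cast
    linarith [goal']
lemma bern2' (x : ℝ) (hx0 : 0 ≤ x) (hx1 : x ≤ 1) (n : ℕ) :
    (1 + n * x + n * ((n:ℝ) - 1) / 2 * x ^ 2) * (1 - x) ^ n ≤ 1 := by
  have h1 := bern2aux x hx0 n
  have h0 : (0:ℝ) ≤ 1 + n * x + n * ((n:ℝ) - 1) / 2 * x ^ 2 := by
    have := nnm1 n
    positivity
  calc (1 + n * x + n * ((n:ℝ) - 1) / 2 * x ^ 2) * (1 - x) ^ n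
      ≤ (1+x)^n * (1-x)^n := mul_le_mul_of_nonneg_right h1 (pow_nonneg (by linarith) n)
    _ = (1 - x^2)^n := by rw [← mul_pow]; ring_nf
    _ ≤ 1 := pow_le_one₀ (by nlinarith) (by nlinarith)

lemma sq_le_two_pow' (n : ℕ) (hn : 4 ≤ n) : n^2 ≤ 2^n := by
  induction n with
  | zero => omega
  | succ n ih =>
    rcases Nat.lt_or_ge n 4 with h | h
    · interval_cases n <;> simp_all
    · have h1 : 2*n+1 ≤ 2^n := by
        have : n^2 ≤ 2^n := ih h
        nlinarith
      have h2 := ih h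
      calc (n+1)^2 ≤ 2^n + 2^n := by nlinarith
        _ = 2^(n+1) := by ring

lemma rpadd (a b : ℝ) : (2:ℝ)^a * (2:ℝ)^b = 2^(a+b) := (Real.rpow_add two_pos a b).symm
lemma rpow_pow (a : ℝ) (n : ℕ) : ((2:ℝ)^a)^n = 2^(a*n) := by
  rw [← Real.rpow_natCast ((2:ℝ)^a) n, ← Real.rpow_mul (by norm_num)]


lemma cubfact (G d R : ℝ) (hG : 128 ≤ G) (hd : 0 < d) (hqq : G*G*d = R) (hR : 128 ≤ R) :
    4 ≤ (G-1)*((G-1)-1)*d := by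
  have hnn : (0:ℝ) ≤ (G-1)*((G-1)-1) - G*G/4 := by nlinarith
  nlinarith [mul_nonneg hnn hd.le]

lemma quadstar (Pa Pb d : ℝ) (h2 : Pa*Pb*d^2 = 2) (ha : Pa*d^2 ≤ d) (hb : Pb*d^2 ≤ 1/2)
    (hd : 0 < d) (hds : d ≤ 1/128) : 1 ≤ (Pa-1)*(Pb-1)*d^2 := by nlinarith [sq_nonneg d]

lemma sqrt2_lb : (1.4:ℝ) ≤ (2:ℝ)^((1:ℝ)/2) := by
  have h1 : ((2:ℝ)^((1:ℝ)/2))^2 = 2^((1:ℝ)) := by rw [rpow_pow]; norm_num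
  have h2 : (2:ℝ)^((1:ℝ)) = 2 := by
    norm_num [show ((1:ℝ)) = ((1:ℕ):ℝ) by norm_num, Real.rpow_natCast]
  nlinarith [Real.rpow_pos_of_pos (show (0:ℝ)<2 by norm_num) ((1:ℝ)/2)]

lemma halfb (t X : ℝ) (h1 : (1+t)*X ≤ 1) (h2 : 1 ≤ t) (h0 : 0 ≤ X) : X ≤ 1/2 := by nlinarith

lemma cube0 (Pa Pb d : ℝ) (hA0 : 1 ≤ Pa) (hB2 : 2 ≤ Pb) (hd : 0 < d) :
    0 ≤ (Pa-1)*(Pb-1)*((Pb-1)-1)*d/2 := by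
  have h : (0:ℝ) ≤ (Pa-1)*(Pb-1)*((Pb-1)-1) := by
    apply mul_nonneg (mul_nonneg (by linarith) (by linarith)) (by linarith)
  positivity

lemma K14 (K : ℕ) (hK : 1 ≤ K) (hlog : Real.logb 2 K ≤ (K:ℝ)/2 - 3) : 14 ≤ K := by
  by_contra h
  push_neg at h
  have hKpos : (0:ℝ) < K := by exact_mod_cast hK
  have hlb : (K:ℝ)/2 - 3 < Real.logb 2 K := by
    rcases Nat.lt_or_ge K 6 with h5 | h6
    · have : Real.logb 2 K ≥ 0 := Real.logb_nonneg (by norm_num) (by exact_mod_cast hK)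
      have : (K:ℝ) ≤ 5 := by exact_mod_cast Nat.lt_succ_iff.mp h5
      linarith [Real.logb_nonneg (show (1:ℝ)<2 by norm_num) (show (1:ℝ) ≤ K by exact_mod_cast hK)]
    · -- 6 ≤ K ≤ 13 : show 2^(K/2-3) < K then use lt_logb
      have hrp : (2:ℝ)^((K:ℝ)/2-3) < K := by
        rcases Nat.lt_or_ge K 12 with h11 | h12
        · have hle : (2:ℝ)^((K:ℝ)/2-3) ≤ 2^((5:ℝ)/2) := by
            apply Real.rpow_le_rpow_of_exponent_le (by norm_num)
            have : (K:ℝ) ≤ 11 := by exact_mod_cast Nat.lt_succ_iff.mp h11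
            linarith
          have h1 : ((2:ℝ)^((5:ℝ)/2))^2 = 2^((5:ℝ)) := by rw [rpow_pow]; norm_num
          have h2 : (2:ℝ)^((5:ℝ)) = 32 := by
            norm_num [show ((5:ℝ)) = ((5:ℕ):ℝ) by norm_num, Real.rpow_natCast]
          have h3 : (2:ℝ)^((5:ℝ)/2) < 6 := by
            nlinarith [Real.rpow_pos_of_pos (show (0:ℝ)<2 by norm_num) ((5:ℝ)/2)]
          have : (6:ℝ) ≤ K := by exact_mod_cast h6
          linarith
        · have hle : (2:ℝ)^((K:ℝ)/2-3) ≤ 2^((7:ℝ)/2) := by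
            apply Real.rpow_le_rpow_of_exponent_le (by norm_num)
            have : (K:ℝ) ≤ 13 := by exact_mod_cast Nat.lt_succ_iff.mp h
            linarith
          have h1 : ((2:ℝ)^((7:ℝ)/2))^2 = 2^((7:ℝ)) := by rw [rpow_pow]; norm_num
          have h2 : (2:ℝ)^((7:ℝ)) = 128 := by
            norm_num [show ((7:ℝ)) = ((7:ℕ):ℝ) by norm_num, Real.rpow_natCast]
          have h3 : (2:ℝ)^((7:ℝ)/2) < 12 := by
            nlinarith [Real.rpow_pos_of_pos (show (0:ℝ)<2 by norm_num) ((7:ℝ)/2)]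
          have : (12:ℝ) ≤ K := by exact_mod_cast h12
          linarith
      calc (K:ℝ)/2 - 3 = Real.logb 2 ((2:ℝ)^((K:ℝ)/2-3)) := by
            rw [Real.logb_rpow (by norm_num : (0:ℝ) < 2) (by norm_num : (2:ℝ) ≠ 1)]
        _ < Real.logb 2 K := by
            apply Real.logb_lt_logb (by norm_num)
            · exact Real.rpow_pos_of_pos (by norm_num) _
            · exact hrp
  linarith

section Pair
variable (K : ℕ)

-- facts about δ
lemma delta_pos (K : ℕ) : 0 < (2:ℝ)^(-(K:ℝ)/2) := Real.rpow_pos_of_pos (by norm_num) _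
lemma delta_small (K : ℕ) (hK : 14 ≤ K) : (2:ℝ)^(-(K:ℝ)/2) ≤ 1/128 := by
  have : (2:ℝ)^(-(K:ℝ)/2) ≤ 2^(-(7:ℝ)) := by
    apply Real.rpow_le_rpow_of_exponent_le (by norm_num)
    have : (14:ℝ) ≤ K := by exact_mod_cast hK
    linarith
  have h2 : (2:ℝ)^(-(7:ℝ)) = 1/128 := by
    rw [Real.rpow_neg (by norm_num)]
    norm_num [show ((7:ℝ)) = ((7:ℕ):ℝ) by norm_num, Real.rpow_natCast]
  linarith

-- (1-δ)^(2^a-1) ≤ 1/(1+Aδ) combined bound helper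

lemma comb (A B δ X Y : ℝ) (hδ0 : 0 < δ) (hA0 : 0 ≤ A) (hB1 : 1 ≤ B)
    (hX0 : 0 ≤ X) (hY0 : 0 ≤ Y)
    (hX : (1 + A*δ) * X ≤ 1) (hY : (1 + B*δ + B*(B-1)/2*δ^2) * Y ≤ 1)
    (hstar : 1 ≤ A*B*δ^2 + A*B*(B-1)*δ^3/2) : X + Y ≤ 1 := by
  have h1 : (0:ℝ) ≤ B*δ := mul_nonneg (by linarith) hδ0.le
  have h2 : (0:ℝ) ≤ B*(B-1)/2*δ^2 := by
    have : (0:ℝ) ≤ B*(B-1) := mul_nonneg (by linarith) (by linarith)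
    positivity
  have hPpos : (0:ℝ) < 1 + A*δ := by nlinarith [mul_nonneg hA0 hδ0.le]
  have hDpos : (0:ℝ) < 1 + B*δ + B*(B-1)/2*δ^2 := by linarith
  have hXb : X ≤ 1/(1 + A*δ) := by rw [le_div_iff₀ hPpos]; linarith [hX]
  have hYb : Y ≤ 1/(1 + B*δ + B*(B-1)/2*δ^2) := by rw [le_div_iff₀ hDpos]; linarith [hY]
  have hPD : (1 + B*δ + B*(B-1)/2*δ^2) + (1 + A*δ)
      ≤ (1 + A*δ) * (1 + B*δ + B*(B-1)/2*δ^2) := by nlinarith [hstar]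
  have : 1/(1 + A*δ) + 1/(1 + B*δ + B*(B-1)/2*δ^2) ≤ 1 := by
    rw [div_add_div _ _ (ne_of_gt hPpos) (ne_of_gt hDpos), div_le_one (by positivity)]
    linarith
  linarith

set_option maxHeartbeats 2000000 in
lemma pair_main (K a b : ℕ) (hK : 14 ≤ K) (ha : 1 ≤ a) (hab : a + b = K + 1) (hab2 : a ≤ b) :
    (1 - (2:ℝ)^(-(K:ℝ)/2))^(2^a-1) + (1 - (2:ℝ)^(-(K:ℝ)/2))^(2^b-1) ≤ 1 := by
  set δ : ℝ := (2:ℝ)^(-(K:ℝ)/2) with hδ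
  have hδ0 : 0 < δ := delta_pos K
  have hδs : δ ≤ 1/128 := delta_small K hK
  have hδ1 : δ ≤ 1 := by linarith
  -- casts for A = 2^a - 1, B = 2^b - 1
  have hb : 1 ≤ b := le_trans ha hab2
  have h2a : (1:ℕ) ≤ 2^a := Nat.one_le_two_pow
  have h2b : (1:ℕ) ≤ 2^b := Nat.one_le_two_pow
  have hA : ((2^a-1 : ℕ) : ℝ) = (2:ℝ)^a - 1 := by push_cast [h2a]; ring
  have hB : ((2^b-1 : ℕ) : ℝ) = (2:ℝ)^b - 1 := by push_cast [h2b]; ring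
  -- real powers
  have hpa : ((2:ℝ)^a) * δ = (2:ℝ)^((a:ℝ) - (K:ℝ)/2) := by
    rw [← Real.rpow_natCast 2 a, rpadd]; ring_nf
  have hpb : ((2:ℝ)^b) * δ = (2:ℝ)^((b:ℝ) - (K:ℝ)/2) := by
    rw [← Real.rpow_natCast 2 b, rpadd]; ring_nf
  have hδ2 : δ^2 = (2:ℝ)^(-(K:ℝ)) := by rw [hδ, rpow_pow]; norm_num
  have hδ3 : δ^3 = (2:ℝ)^(-(3*(K:ℝ)/2)) := by rw [hδ, rpow_pow]; ring_nf
  have hX0 : (0:ℝ) ≤ (1-δ)^(2^a-1) := pow_nonneg (by linarith) _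
  have hY0 : (0:ℝ) ≤ (1-δ)^(2^b-1) := pow_nonneg (by linarith) _
  have hKr : (14:ℝ) ≤ (K:ℝ) := by exact_mod_cast hK
  rcases Nat.lt_or_ge (2*a) (K+1) with hmid | hmid
  · -- 2a ≤ K : paired case
    have h2aK : 2*a ≤ K := by omega
    have haK2 : (a:ℝ) ≤ (K:ℝ)/2 := by
      have : (2*a:ℝ) ≤ K := by exact_mod_cast h2aK
      push_cast at this; linarith
    have hbr : (b:ℝ) = (K:ℝ) + 1 - (a:ℝ) := by
      have : (a:ℝ)+(b:ℝ) = (K:ℝ)+1 := by exact_mod_cast hab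
      linarith
    have hXb := bern1' δ hδ0.le hδ1 (2^a-1)
    have hYb := bern2' δ hδ0.le hδ1 (2^b-1)
    rw [hA] at hXb
    rw [hB] at hYb
    have hab2K : ((2:ℝ)^a) * ((2:ℝ)^b) * δ^2 = 2 := by
      rw [← Real.rpow_natCast 2 a, ← Real.rpow_natCast 2 b, hδ2, rpadd, rpadd]
      have e : (a:ℝ) + (b:ℝ) + -(K:ℝ) = 1 := by
        have : (a:ℝ)+(b:ℝ) = (K:ℝ)+1 := by exact_mod_cast hab
        linarith
      rw [e]
      norm_num [show ((1:ℝ)) = ((1:ℕ):ℝ) by norm_num, Real.rpow_natCast]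
    have hstar : 1 ≤ ((2:ℝ)^a-1)*((2:ℝ)^b-1)*δ^2 + ((2:ℝ)^a-1)*((2:ℝ)^b-1)*(((2:ℝ)^b-1)-1)*δ^3/2 := by
      rcases Nat.eq_or_lt_of_le ha with ha1 | ha2
      · -- a = 1 : need cubic term
        have h2ae : (2:ℝ)^a = 2 := by rw [show a = 1 by omega]; norm_num
        have hbK : (b:ℝ) = (K:ℝ) := by rw [hbr, show (a:ℝ) = 1 by exact_mod_cast ha1.symm]; ring
        have hbKn : b = K := by exact_mod_cast hbK
        have hBδ2 : ((2:ℝ)^b) * δ^2 = 1 := by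
          linear_combination hab2K/2 - ((2:ℝ)^b*δ^2/2) * h2ae
        have hQ : (128:ℝ) ≤ (2:ℝ)^b := by
          calc (128:ℝ) = 2^7 := by norm_num
            _ ≤ 2^b := pow_le_pow_right₀ (by norm_num) (by omega)
        have hqq : ((2:ℝ)^b) * ((2:ℝ)^b) * δ^3 = (2:ℝ)^((K:ℝ)/2) := by
          rw [← Real.rpow_natCast 2 b, hδ3, rpadd, rpadd, hbK]
          ring_nf
        have hR : (128:ℝ) ≤ (2:ℝ)^((K:ℝ)/2) := by
          calc (128:ℝ) = 2^((7:ℝ)) := by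
                norm_num [show ((7:ℝ)) = ((7:ℕ):ℝ) by norm_num, Real.rpow_natCast]
            _ ≤ 2^((K:ℝ)/2) := Real.rpow_le_rpow_of_exponent_le (by norm_num) (by linarith)
        have hδ3pos : (0:ℝ) < δ^3 := by positivity
        have hcub : (4:ℝ) ≤ ((2:ℝ)^b-1)*(((2:ℝ)^b-1)-1)*δ^3 :=
          cubfact _ _ _ hQ hδ3pos hqq hR
        have hδ2le : δ^2 ≤ 1 := pow_le_one₀ hδ0.le hδ1
        have key : ((2:ℝ)^a - 1) * ((2:ℝ)^b - 1) * δ^2 = 1 - δ^2 := by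
          rw [h2ae]; linear_combination hBδ2
        have key2 : ((2:ℝ)^a - 1) = 1 := by rw [h2ae]; norm_num
        have hcub' : (2:ℝ) ≤ ((2:ℝ)^a-1)*((2:ℝ)^b-1)*(((2:ℝ)^b-1)-1)*δ^3/2 := by
          rw [key2, one_mul]; linarith [hcub]
        linarith [key, hcub', hδ2le]
      · -- a ≥ 2 : quadratic suffices
        have haδ2 : ((2:ℝ)^a) * δ^2 ≤ δ := by
          rw [← Real.rpow_natCast 2 a, hδ2, rpadd, hδ]
          apply Real.rpow_le_rpow_of_exponent_le (by norm_num)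
          linarith
        have hbδ2 : ((2:ℝ)^b) * δ^2 ≤ 1/2 := by
          rw [← Real.rpow_natCast 2 b, hδ2, rpadd]
          calc (2:ℝ)^((b:ℝ) + -(K:ℝ)) ≤ 2^(-(1:ℝ)) := by
                apply Real.rpow_le_rpow_of_exponent_le (by norm_num)
                have : (2:ℝ) ≤ (a:ℝ) := by exact_mod_cast ha2
                linarith [hbr]
            _ = 1/2 := by
                rw [Real.rpow_neg (by norm_num)]
                norm_num [show ((1:ℝ)) = ((1:ℕ):ℝ) by norm_num, Real.rpow_natCast]
        have h2b1 : (1:ℝ) ≤ (2:ℝ)^b := one_le_pow₀ (by norm_num)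
        have h2a1 : (1:ℝ) ≤ (2:ℝ)^a := one_le_pow₀ (by norm_num)
        have hquad : (1:ℝ) ≤ ((2:ℝ)^a-1)*((2:ℝ)^b-1)*δ^2 :=
          quadstar _ _ _ hab2K haδ2 hbδ2 hδ0 hδs
        have hcub0 : (0:ℝ) ≤ ((2:ℝ)^a-1)*((2:ℝ)^b-1)*(((2:ℝ)^b-1)-1)*δ^3/2 := by
          apply cube0
          · exact one_le_pow₀ (by norm_num)
          · calc (2:ℝ) = 2^1 := by norm_num
              _ ≤ (2:ℝ)^b := pow_le_pow_right₀ (by norm_num) hb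
          · positivity
        linarith
    have hA0 : (0:ℝ) ≤ (2:ℝ)^a - 1 := by
      have : (1:ℝ) ≤ (2:ℝ)^a := one_le_pow₀ (by norm_num)
      linarith
    have hB1 : (1:ℝ) ≤ (2:ℝ)^b - 1 := by
      have : (2:ℝ) ≤ (2:ℝ)^b := by
        calc (2:ℝ) = 2^1 := by norm_num
          _ ≤ (2:ℝ)^b := pow_le_pow_right₀ (by norm_num) hb
      linarith
    exact comb _ _ δ _ _ hδ0 hA0 hB1 hX0 hY0 hXb hYb hstar
  · -- middle : 2a = K+1, a = b
    have hae : a = b := by omega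
    subst hae
    have h2aK1 : 2*a = K+1 := by omega
    have hXb := bern1' δ hδ0.le hδ1 (2^a-1)
    rw [hA] at hXb
    have e1 : ((2:ℝ)^a) * δ = (2:ℝ)^((1:ℝ)/2) := by
      rw [hpa]
      congr 1
      have : (2*(a:ℝ)) = (K:ℝ)+1 := by exact_mod_cast h2aK1
      linarith
    have hsqrt2 : (1.4:ℝ) ≤ (2:ℝ)^((1:ℝ)/2) := sqrt2_lb
    have hge1 : (1:ℝ) ≤ ((2:ℝ)^a - 1)*δ := by
      have : ((2:ℝ)^a - 1)*δ = (2:ℝ)^((1:ℝ)/2) - δ := by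
        linear_combination e1
      rw [this]; linarith
    have hhalf : (1-δ)^(2^a-1) ≤ 1/2 := halfb _ _ (by linarith [hXb]) hge1 hX0
    linarith

end Pair
open Finset

lemma sum_pair (K : ℕ) (f : ℕ → ℝ) (hpair : ∀ j, j < K → f (j+1) + f (K-j) ≤ 1) :
    ∑ k ∈ Finset.Icc 1 K, f k ≤ (K:ℝ)/2 := by
  have h1 : ∑ k ∈ Finset.Icc 1 K, f k = ∑ j ∈ Finset.range K, f (1+j) := by
    rw [← Finset.Ico_add_one_right_eq_Icc, Finset.sum_Ico_eq_sum_range]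
    simp
  have h2 : ∑ j ∈ Finset.range K, f (K - j) = ∑ j ∈ Finset.range K, f (1+j) := by
    have := Finset.sum_range_reflect (fun j => f (1+j)) K
    rw [← this]
    apply Finset.sum_congr rfl
    intro j hj
    rw [Finset.mem_range] at hj
    congr 1
    omega
  have h3 : ∑ j ∈ Finset.range K, (f (1+j) + f (K-j)) ≤ ∑ _j ∈ Finset.range K, (1:ℝ) := by
    apply Finset.sum_le_sum
    intro j hj
    rw [Finset.mem_range] at hj
    have := hpair j hj
    rw [Nat.add_comm 1 j]
    linarith [this]
  rw [Finset.sum_add_distrib, h2] at h3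
  simp at h3
  rw [h1]
  linarith



lemma tlb (Kr d c t : ℝ) (h1 : (1-d)*c^2 ≤ t) (h2 : 4*Kr*d^2 ≤ c^2) (hd : 0 < d)
    (hds : d ≤ 1/128) (hK0 : 0 ≤ Kr) : 2*Kr*d^2 ≤ t := by
  nlinarith [mul_le_mul_of_nonneg_left h2 (show (0:ℝ) ≤ 1-d by linarith),
    mul_nonneg (mul_nonneg hK0 (sq_nonneg d)) (show (0:ℝ) ≤ 2-4*d by linarith)]

lemma jtb (P Q Kr d t : ℝ) (hP : 0 < P) (m1 : P*(2*Kr*d) ≤ P*t) (e4 : P*d*Q = 1)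
    (h2L : Q ≤ 2*Kr) (hpd : 0 < P*d) : 1 ≤ P*t := by
  nlinarith [mul_le_mul_of_nonneg_left h2L hpd.le]

lemma Kdelta (Kr R δ : ℝ) (hnr : Kr^2 ≤ R^2) (hR : 0 < R) (hK0 : 0 ≤ Kr) (hRδ : R*δ = 1)
    (hδ0 : 0 < δ) : Kr*δ ≤ 1 := by
  have h : Kr ≤ R := by nlinarith
  nlinarith [mul_le_mul_of_nonneg_right h hδ0.le]

lemma final_assembly (Kr δ sk ρ c v : ℝ) (hδ0 : 0 < δ) (hKr : 14 ≤ Kr) (hsqK : sk^2 = Kr)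
    (hsk0 : 0 ≤ sk) (hKδ : Kr*δ ≤ 1) (hρ1 : ρ ≤ 1) (hρlb : 1 - δ ≤ ρ) (hc0 : 0 ≤ c)
    (hcsm : c ≤ 2*sk*δ) (he : v = (1-ρ) + ρ*c^2) : v + c ≤ 4*sk*δ := by
  have h2sK : 5 ≤ 2*sk := by nlinarith
  have hc2r : c^2 ≤ 4*Kr*δ^2 := by nlinarith [mul_self_le_mul_self hc0 hcsm]
  have h4 : 4*Kr*δ^2 ≤ 4*δ := by nlinarith
  have h5 : 5*δ ≤ 2*sk*δ := by nlinarith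
  have hρc2 : ρ*c^2 ≤ c^2 := by nlinarith [sq_nonneg c]
  linarith

set_option maxHeartbeats 1000000 in
/-- Theorem 2 of the paper: with all users obeying the two-choice rule, for any fleet size
s ∈ [K/2 + λ/μ, K - log₂ K - 3 + λ/μ] the fixed-point load satisfies ρ ∈ [1 - 2^{-K/2}, 1],
and the limiting proportion of problematic stations is at most 4 √K 2^{-K/2}. -/
theorem two_choice_main (K : ℕ) (hK : 1 ≤ K) (lam mu : ℝ)
    (hlam : 0 < lam) (hmu : 0 < mu)
    (ρ : ℝ) (hρ0 : 0 < ρ) (hρ1 : ρ ≤ 1)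
    (u : ℕ → ℝ) (h0 : u 0 = 1)
    (hrec : ∀ k ≤ K, u (k + 1) = ρ * ((u k) ^ 2 - 1) + u 1)
    (hend : u (K + 1) = 0)
    (hnonneg : ∀ k ≤ K, 0 ≤ u k)
    (s : ℝ) (hs : s = (∑ k ∈ Finset.Icc 1 K, u k) + ρ * lam / mu)
    (hsl : (K : ℝ) / 2 + lam / mu ≤ s)
    (hsu : s ≤ (K : ℝ) - Real.logb 2 K - 3 + lam / mu) :
    1 - (2 : ℝ) ^ (-(K : ℝ) / 2) ≤ ρ ∧
    (1 - u 1) + u K ≤ 4 * Real.sqrt K * (2 : ℝ) ^ (-(K : ℝ) / 2) := by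
  set δ : ℝ := (2:ℝ)^(-(K:ℝ)/2) with hδdef
  have hδ0 : 0 < δ := delta_pos K
  have hlog : Real.logb 2 K ≤ (K:ℝ)/2 - 3 := by linarith
  have hK14 : 14 ≤ K := K14 K hK hlog
  have hδs : δ ≤ 1/128 := delta_small K hK14
  have hKr : (14:ℝ) ≤ (K:ℝ) := by exact_mod_cast hK14
  have hδ2 : δ^2 = (2:ℝ)^(-(K:ℝ)) := by rw [hδdef, rpow_pow]; norm_num
  -- u 1 equation
  have hu1 : u 1 = ρ * (1 - (u K)^2) := by
    have h := hrec K le_rfl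
    rw [hend] at h
    linarith
  have hu10 : 0 ≤ u 1 := hnonneg 1 (by omega)
  have huK0 : 0 ≤ u K := hnonneg K le_rfl
  have hρc20 : 0 ≤ ρ * (u K)^2 := mul_nonneg hρ0.le (sq_nonneg _)
  have hu1ρ : u 1 ≤ ρ := by
    rw [hu1]; linarith [hρc20]
  have hsq1 : (u K)^2 ≤ 1 := by
    by_contra hh
    push_neg at hh
    have : ρ * (1 - (u K)^2) < 0 := mul_neg_of_pos_of_neg hρ0 (by linarith)
    linarith [hu1, hu10]
  have huK1 : u K ≤ 1 := by nlinarith [sq_nonneg (u K - 1)]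
  -- Part 1 : ρ ≥ 1 - δ
  have hρlb : 1 - δ ≤ ρ := by
    by_contra hcon
    push_neg at hcon
    have hρle : ρ ≤ 1 - δ := hcon.le
    have hub : ∀ i : ℕ, i + 1 ≤ K → u (i+1) ≤ ρ^(2^(i+1) - 1) := by
      intro i
      induction i with
      | zero =>
        intro _
        have e : (2^1 - 1 : ℕ) = 1 := by norm_num
        rw [e, pow_one]
        exact hu1ρ
      | succ n ih =>
        intro h
        have hn : n + 1 ≤ K := by omega
        have ihh := ih hn
        have hr := hrec (n+1) (by omega)
        have hun0 : 0 ≤ u (n+1) := hnonneg (n+1) hn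
        have hsq : (u (n+1))^2 ≤ (ρ^(2^(n+1)-1))^2 := pow_le_pow_left₀ hun0 ihh 2
        have hexp : ρ * (ρ^(2^(n+1)-1))^2 = ρ^(2^(n+1+1)-1) := by
          rw [← pow_mul, ← pow_succ']
          congr 1
          have h2 : 1 ≤ 2^(n+1) := Nat.one_le_two_pow
          omega
        calc u (n+1+1) = ρ * ((u (n+1))^2 - 1) + u 1 := hr
          _ ≤ ρ * ((u (n+1))^2 - 1) + ρ := by linarith
          _ = ρ * (u (n+1))^2 := by ring
          _ ≤ ρ * (ρ^(2^(n+1)-1))^2 := mul_le_mul_of_nonneg_left hsq hρ0.le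
          _ = ρ^(2^(n+1+1)-1) := hexp
    have hfb : ∀ k, 1 ≤ k → k ≤ K → u k ≤ (1-δ)^(2^k - 1) := by
      intro k h1 h2
      obtain ⟨i, rfl⟩ : ∃ i, k = i+1 := ⟨k-1, by omega⟩
      calc u (i+1) ≤ ρ^(2^(i+1)-1) := hub i h2
        _ ≤ (1-δ)^(2^(i+1)-1) := pow_le_pow_left₀ hρ0.le hρle _
    have hsum : ∑ k ∈ Finset.Icc 1 K, u k ≤ (K:ℝ)/2 := by
      have hle : ∑ k ∈ Finset.Icc 1 K, u k ≤ ∑ k ∈ Finset.Icc 1 K, (1-δ)^(2^k-1) := by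
        apply Finset.sum_le_sum
        intro k hk
        rw [Finset.mem_Icc] at hk
        exact hfb k hk.1 hk.2
      have hp : ∀ j, j < K → (1-δ)^(2^(j+1)-1) + (1-δ)^(2^(K-j)-1) ≤ 1 := by
        intro j hj
        rcases le_total (j+1) (K-j) with h | h
        · exact pair_main K (j+1) (K-j) hK14 (by omega) (by omega) h
        · have := pair_main K (K-j) (j+1) hK14 (by omega) (by omega) h
          linarith
      have := sum_pair K (fun k => (1-δ)^(2^k-1)) hp
      linarith
    have e6 : (1-ρ)*(lam/mu) = lam/mu - ρ*lam/mu := by ring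
    have hpos : 0 < (1-ρ)*(lam/mu) := mul_pos (by linarith) (div_pos hlam hmu)
    linarith [hs, hsl]
  refine ⟨hρlb, ?_⟩
  -- Part 2
  have hub2 : ∀ i : ℕ, i + 1 ≤ K → u (i+1) ≤ (u 1)^(2^i) := by
    intro i
    induction i with
    | zero =>
      intro _
      norm_num
    | succ n ih =>
      intro h
      have hn : n+1 ≤ K := by omega
      have ihh := ih hn
      have hr := hrec (n+1) (by omega)
      have hun0 : 0 ≤ u (n+1) := hnonneg (n+1) hn
      have h1 : u (n+1+1) ≤ (u (n+1))^2 := by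
        have e : u (n+1+1) = ρ*(u (n+1))^2 - ρ*(u K)^2 := by rw [hr, hu1]; ring
        linarith [e, hρc20, mul_nonneg (show (0:ℝ) ≤ 1-ρ by linarith) (sq_nonneg (u (n+1)))]
      calc u (n+1+1) ≤ (u (n+1))^2 := h1
        _ ≤ ((u 1)^(2^n))^2 := pow_le_pow_left₀ hun0 ihh 2
        _ = (u 1)^(2^(n+1)) := by rw [← pow_mul]; congr 1
  have hcK : u K ≤ (u 1)^(2^(K-1)) := by
    have := hub2 (K-1) (by omega)
    rw [show K - 1 + 1 = K by omega] at this
    exact this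
  have hu1le1 : u 1 ≤ 1 := le_trans hu1ρ hρ1
  have hsK1 : 1 ≤ Real.sqrt K := by
    rw [show (1:ℝ) = Real.sqrt 1 by simp]
    exact Real.sqrt_le_sqrt (by exact_mod_cast hK)
  have hsqK : (Real.sqrt K)^2 = (K:ℝ) := Real.sq_sqrt (by positivity)
  have hcsm : u K ≤ 2*Real.sqrt K * δ := by
    by_contra hbig
    push_neg at hbig
    have h2d : (0:ℝ) ≤ 2*Real.sqrt K*δ := by positivity
    have e8 : (2*Real.sqrt K*δ)*(2*Real.sqrt K*δ) = 4*(K:ℝ)*δ^2 := by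
      linear_combination (4*δ^2) * hsqK
    have hc2 : 4*(K:ℝ)*δ^2 ≤ (u K)^2 := by
      have := mul_self_le_mul_self h2d hbig.le
      nlinarith [this, e8]
    have ht0 : 0 ≤ 1 - u 1 := by linarith
    have ht1 : 1 - u 1 ≤ 1 := by linarith
    have htlb : (1-δ)*(u K)^2 ≤ 1 - u 1 := by
      have e : 1 - u 1 = (1-ρ) + ρ*(u K)^2 := by rw [hu1]; ring
      linarith [e, mul_le_mul_of_nonneg_right hρlb (sq_nonneg (u K)), hρ1]
    have htK : 2*(K:ℝ)*δ^2 ≤ 1 - u 1 :=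
      tlb _ _ _ _ htlb hc2 hδ0 hδs (by positivity)
    have hL1 : 2^(Nat.log 2 K) ≤ K := Nat.pow_log_le_self 2 (by omega)
    have hL2 : K < 2^(Nat.log 2 K + 1) := Nat.lt_pow_succ_log_self (by norm_num) K
    have hLK : Nat.log 2 K + 1 ≤ K := by
      have := Nat.lt_two_pow_self (n := Nat.log 2 K)
      omega
    have e2 : ((2:ℝ)^K) * δ^2 = 1 := by
      rw [← Real.rpow_natCast 2 K, hδ2, rpadd]
      rw [show (K:ℝ) + -(K:ℝ) = 0 by ring, Real.rpow_zero]
    have e4 : (2:ℝ)^(K-1-Nat.log 2 K) * δ^2 * (2:ℝ)^(Nat.log 2 K + 1) = 1 := by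
      rw [show (2:ℝ)^(K-1-Nat.log 2 K) * δ^2 * (2:ℝ)^(Nat.log 2 K + 1)
          = (2:ℝ)^(K-1-Nat.log 2 K) * (2:ℝ)^(Nat.log 2 K + 1) * δ^2 by ring, ← pow_add,
        show K-1-Nat.log 2 K + (Nat.log 2 K + 1) = K by omega]
      exact e2
    have h2L : ((2:ℝ))^(Nat.log 2 K + 1) ≤ 2*(K:ℝ) := by
      have : (2:ℕ)^(Nat.log 2 K + 1) ≤ 2*K := by
        have : (2:ℕ)^(Nat.log 2 K + 1) = 2 * 2^(Nat.log 2 K) := by ring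
        omega
      exact_mod_cast this
    have hjt : 1 ≤ (2:ℝ)^(K-1-Nat.log 2 K) * (1 - u 1) := by
      have hp0 : (0:ℝ) < (2:ℝ)^(K-1-Nat.log 2 K) := by positivity
      have m1 : (2:ℝ)^(K-1-Nat.log 2 K) * (2*(K:ℝ)*δ^2) ≤ (2:ℝ)^(K-1-Nat.log 2 K) * (1 - u 1) :=
        mul_le_mul_of_nonneg_left htK hp0.le
      have hp1 : (0:ℝ) < (2:ℝ)^(K-1-Nat.log 2 K) * δ^2 := by positivity
      exact jtb _ _ _ _ _ hp0 (by linarith [m1]) e4 h2L hp1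
    have hbj : (u 1)^(2^(K-1-Nat.log 2 K)) ≤ 1/2 := by
      have hb := bern1' (1 - u 1) ht0 ht1 (2^(K-1-Nat.log 2 K))
      have hcast : ((2^(K-1-Nat.log 2 K):ℕ):ℝ) = (2:ℝ)^(K-1-Nat.log 2 K) := by push_cast; ring
      rw [hcast] at hb
      have hX0 : 0 ≤ (1-(1 - u 1))^(2^(K-1-Nat.log 2 K)) := pow_nonneg (by linarith) _
      have := halfb _ _ (by linarith [hb]) hjt (by simpa using hX0)
      simpa using this
    have hcle : u K ≤ (1/2:ℝ)^(2^(Nat.log 2 K)) := by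
      have e5 : ((u 1)^(2^(K-1-Nat.log 2 K)))^(2^(Nat.log 2 K)) = (u 1)^(2^(K-1)) := by
        rw [← pow_mul, ← pow_add]
        congr 2
        omega
      calc u K ≤ (u 1)^(2^(K-1)) := hcK
        _ = ((u 1)^(2^(K-1-Nat.log 2 K)))^(2^(Nat.log 2 K)) := e5.symm
        _ ≤ (1/2)^(2^(Nat.log 2 K)) := pow_le_pow_left₀ (pow_nonneg hu10 _) hbj _
    have hhalfδ : ((1:ℝ)/2)^(2^(Nat.log 2 K)) ≤ δ := by
      have hKL : (K:ℝ)/2 ≤ ((2^(Nat.log 2 K):ℕ) : ℝ) := by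
        have : (K:ℝ) ≤ 2*((2^(Nat.log 2 K):ℕ) : ℝ) := by
          have : (K:ℕ) ≤ 2*2^(Nat.log 2 K) := by omega
          exact_mod_cast this
        linarith
      have e7 : ((1:ℝ)/2)^(2^(Nat.log 2 K)) = (2:ℝ)^(-(((2^(Nat.log 2 K):ℕ)):ℝ)) := by
        rw [one_div, inv_pow, ← Real.rpow_natCast 2 (2^(Nat.log 2 K)), ← Real.rpow_neg (by norm_num)]
      rw [e7, hδdef]
      apply Real.rpow_le_rpow_of_exponent_le one_le_two
      linarith
    linarith [le_trans hcle hhalfδ, hbig, mul_le_mul_of_nonneg_right hsK1 hδ0.le]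
  -- final numeric assembly
  have hKδ : (K:ℝ)*δ ≤ 1 := by
    have hn : (K:ℕ)^2 ≤ 2^K := sq_le_two_pow' K (by omega)
    have hnr : ((K:ℝ))^2 ≤ (2:ℝ)^(K:ℕ) := by exact_mod_cast hn
    have hR2 : ((2:ℝ)^((K:ℝ)/2))^2 = (2:ℝ)^(K:ℕ) := by
      rw [rpow_pow, ← Real.rpow_natCast 2 K]
      congr 1
      ring
    have hRpos : (0:ℝ) < (2:ℝ)^((K:ℝ)/2) := Real.rpow_pos_of_pos (by norm_num) _
    have hRδ : (2:ℝ)^((K:ℝ)/2) * δ = 1 := by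
      rw [hδdef, rpadd, show (K:ℝ)/2 + -(K:ℝ)/2 = 0 by ring, Real.rpow_zero]
    exact Kdelta (K:ℝ) ((2:ℝ)^((K:ℝ)/2)) δ (by rw [hR2]; exact hnr) hRpos (by positivity) hRδ hδ0
  have e : 1 - u 1 = (1-ρ) + ρ*(u K)^2 := by rw [hu1]; ring
  exact final_assembly (K:ℝ) δ (Real.sqrt K) ρ (u K) (1 - u 1) hδ0 hKr hsqK
    (Real.sqrt_nonneg _) hKδ hρ1 hρlb huK0 hcsm e
end

section
/- For any integer K ≥ 1, the mean of the truncated geometric distribution m(ρ) = Σ_{k=1}^K k ρ^k (1−ρ)/(1−ρ^{K+1}) (with m(1) = K/2) is a strictly increasing continuous function of ρ on (0,∞), with lim_{ρ→0} m(ρ) = 0 and lim_{ρ→∞} m(ρ) = K. -/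
/-- Mean m(ρ) = Σ_{k=1}^K k ν_ρ(k) of the truncated geometric distribution (m(1) = K/2). -/
noncomputable def m (K : ℕ) (ρ : ℝ) : ℝ := ∑ k ∈ Finset.Icc 1 K, (k : ℝ) * nu K ρ k

open Finset

/-- numerator polynomial -/
noncomputable def Gp (K : ℕ) (ρ : ℝ) : ℝ := ∑ k ∈ range (K+1), (k : ℝ) * ρ ^ k
/-- denominator polynomial -/
noncomputable def Sp (K : ℕ) (ρ : ℝ) : ℝ := ∑ k ∈ range (K+1), ρ ^ k

lemma Sp_pos (K : ℕ) {ρ : ℝ} (hρ : 0 < ρ) : 0 < Sp K ρ := by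
  apply Finset.sum_pos (fun i _ => pow_pos hρ i)
  exact ⟨0, Finset.mem_range.mpr (Nat.succ_pos K)⟩

lemma Gp_eq (K : ℕ) (ρ : ℝ) : Gp K ρ = ∑ k ∈ Finset.Icc 1 K, (k : ℝ) * ρ ^ k := by
  rw [Gp]
  rw [Finset.sum_subset (s₁ := Finset.Icc 1 K)]
  · intro x hx
    simp only [Finset.mem_Icc] at hx
    simp only [Finset.mem_range]
    omega
  · intro x hx hx'
    simp only [Finset.mem_range, Finset.mem_Icc] at hx hx'
    have : x = 0 := by omega
    simp [this]

lemma m_eq (K : ℕ) {ρ : ℝ} (hρ : 0 < ρ) : m K ρ = Gp K ρ / Sp K ρ := by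
  rw [m, Gp_eq]
  by_cases h : ρ = 1
  · subst h
    have hS : Sp K 1 = (K : ℝ) + 1 := by simp [Sp]
    simp only [nu, if_pos rfl, hS, one_pow, mul_one]
    rw [Finset.sum_div]
    apply Finset.sum_congr rfl
    intro k _
    simp [mul_one_div, div_eq_mul_inv]
  · have hgeom : (1 - ρ) * Sp K ρ = 1 - ρ ^ (K + 1) := by
      have := geom_sum_mul ρ (K + 1)
      rw [Sp]
      nlinarith [this]
    have hSne : Sp K ρ ≠ 0 := ne_of_gt (Sp_pos K hρ)
    have h1ρ : (1 : ℝ) - ρ ≠ 0 := by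
      intro hc; apply h; linarith
    have hden : 1 - ρ ^ (K + 1) ≠ 0 := by
      rw [← hgeom]; exact mul_ne_zero h1ρ hSne
    simp only [nu, if_neg h]
    rw [Finset.sum_div]
    apply Finset.sum_congr rfl
    intro k _
    rw [← hgeom]
    field_simp

lemma key_nonneg {a b : ℝ} (ha : 0 ≤ a) (hab : a ≤ b) (i j : ℕ) :
    0 ≤ ((j : ℝ) - i) * (b ^ j * a ^ i - a ^ j * b ^ i) := by
  have hb : 0 ≤ b := le_trans ha hab
  rcases le_total i j with hij | hij
  · obtain ⟨c, rfl⟩ := Nat.exists_eq_add_of_le hij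
    have h1 : (0:ℝ) ≤ ((i + c : ℕ) : ℝ) - i := by push_cast; linarith [Nat.cast_nonneg (α := ℝ) c]
    apply mul_nonneg h1
    have : b ^ (i + c) * a ^ i - a ^ (i + c) * b ^ i = (a*b)^i * (b^c - a^c) := by
      rw [pow_add, pow_add, mul_pow]; ring
    rw [this]
    exact mul_nonneg (pow_nonneg (mul_nonneg ha hb) i) (sub_nonneg.mpr (pow_le_pow_left₀ ha hab c))
  · obtain ⟨c, rfl⟩ := Nat.exists_eq_add_of_le hij
    have h1 : ((j:ℝ) - ((j + c : ℕ):ℝ)) ≤ 0 := by push_cast; linarith [Nat.cast_nonneg (α := ℝ) c]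
    have h2 : b ^ j * a ^ (j + c) - a ^ j * b ^ (j + c) ≤ 0 := by
      have : b ^ j * a ^ (j + c) - a ^ j * b ^ (j + c) = -((a*b)^j * (b^c - a^c)) := by
        rw [pow_add, pow_add, mul_pow]; ring
      rw [this]
      simp only [neg_nonpos]
      exact mul_nonneg (pow_nonneg (mul_nonneg ha hb) j) (sub_nonneg.mpr (pow_le_pow_left₀ ha hab c))
    nlinarith

lemma gS_lt {a b : ℝ} (ha : 0 < a) (hab : a < b) (K : ℕ) (hK : 1 ≤ K) :
    Gp K a * Sp K b < Gp K b * Sp K a := by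
  have hb : 0 < b := lt_trans ha hab
  set s := range (K + 1) with hs
  set X : ℕ → ℕ → ℝ := fun i j => b ^ j * a ^ i - a ^ j * b ^ i with hX
  have hprod : Gp K b * Sp K a - Gp K a * Sp K b
      = ∑ i ∈ s, ∑ j ∈ s, (j : ℝ) * X i j := by
    rw [Gp, Gp, Sp, Sp, Finset.sum_mul_sum, Finset.sum_mul_sum]
    rw [Finset.sum_comm (s := s) (t := s) (f := fun j i => ((j:ℝ) * b ^ j) * a ^ i)]
    rw [Finset.sum_comm (s := s) (t := s) (f := fun j i => ((j:ℝ) * a ^ j) * b ^ i)]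
    rw [← Finset.sum_sub_distrib]
    apply Finset.sum_congr rfl
    intro i _
    rw [← Finset.sum_sub_distrib]
    apply Finset.sum_congr rfl
    intro j _
    simp only [hX]; ring
  have hanti : ∑ i ∈ s, ∑ j ∈ s, (i : ℝ) * X i j
      = - ∑ i ∈ s, ∑ j ∈ s, (j : ℝ) * X i j := by
    rw [Finset.sum_comm]
    rw [← Finset.sum_neg_distrib]
    apply Finset.sum_congr rfl
    intro i _
    rw [← Finset.sum_neg_distrib]
    apply Finset.sum_congr rfl
    intro j _
    simp only [hX]; ring
  have htwo : ∑ i ∈ s, ∑ j ∈ s, ((j : ℝ) - i) * X i j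
      = 2 * ∑ i ∈ s, ∑ j ∈ s, (j : ℝ) * X i j := by
    have : ∀ i j : ℕ, ((j : ℝ) - i) * X i j = (j : ℝ) * X i j - (i : ℝ) * X i j := by
      intro i j; ring
    simp_rw [this, Finset.sum_sub_distrib, hanti]
    ring
  have hpos : 0 < ∑ i ∈ s, ∑ j ∈ s, ((j : ℝ) - i) * X i j := by
    rw [← Finset.sum_product']
    apply Finset.sum_pos'
    · intro p _
      exact key_nonneg ha.le hab.le p.1 p.2
    · refine ⟨(0, 1), ?_, ?_⟩
      · simp only [Finset.mem_product, hs, Finset.mem_range]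
        omega
      · simp only [hX]
        norm_num
        linarith
  nlinarith [htwo ▸ hpos]

lemma Gp_cont (K : ℕ) : Continuous (Gp K) := by
  apply continuous_finset_sum
  intro k _
  exact (continuous_const.mul (continuous_pow k))

lemma Sp_cont (K : ℕ) : Continuous (Sp K) := by
  apply continuous_finset_sum
  intro k _
  exact continuous_pow k

noncomputable def Phi (K : ℕ) (x : ℝ) : ℝ := ∑ k ∈ Finset.range (K+1), (k : ℝ) * x ^ (K - k)
noncomputable def Psi (K : ℕ) (x : ℝ) : ℝ := ∑ k ∈ Finset.range (K+1), x ^ (K - k)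

lemma Phi_cont (K : ℕ) : Continuous (Phi K) := by
  apply continuous_finset_sum
  intro k _
  exact (continuous_const.mul (continuous_pow _))

lemma Psi_cont (K : ℕ) : Continuous (Psi K) := by
  apply continuous_finset_sum
  intro k _
  exact continuous_pow _

lemma Phi_zero (K : ℕ) : Phi K 0 = K := by
  rw [Phi, Finset.sum_eq_single K]
  · simp
  · intro k hk hk'
    rw [Finset.mem_range] at hk
    rw [zero_pow (by omega), mul_zero]
  · intro h
    exact absurd (Finset.mem_range.mpr (Nat.lt_succ_self K)) h

lemma Psi_zero (K : ℕ) : Psi K 0 = 1 := by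
  rw [Psi, Finset.sum_eq_single K]
  · simp
  · intro k hk hk'
    rw [Finset.mem_range] at hk
    exact zero_pow (by omega)
  · intro h
    exact absurd (Finset.mem_range.mpr (Nat.lt_succ_self K)) h

lemma Gp_inv (K : ℕ) {ρ : ℝ} (hρ : 0 < ρ) : Gp K ρ = ρ ^ K * Phi K ρ⁻¹ := by
  rw [Gp, Phi, Finset.mul_sum]
  apply Finset.sum_congr rfl
  intro k hk
  rw [Finset.mem_range] at hk
  have hk' : k ≤ K := by omega
  have : ρ ^ k = ρ ^ K / ρ ^ (K - k) := by
    rw [eq_div_iff (pow_ne_zero _ (ne_of_gt hρ)), ← pow_add]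
    congr 1
    omega
  rw [this, inv_pow, div_eq_mul_inv]
  ring

lemma Sp_inv (K : ℕ) {ρ : ℝ} (hρ : 0 < ρ) : Sp K ρ = ρ ^ K * Psi K ρ⁻¹ := by
  rw [Sp, Psi, Finset.mul_sum]
  apply Finset.sum_congr rfl
  intro k hk
  rw [Finset.mem_range] at hk
  have hk' : k ≤ K := by omega
  have : ρ ^ k = ρ ^ K / ρ ^ (K - k) := by
    rw [eq_div_iff (pow_ne_zero _ (ne_of_gt hρ)), ← pow_add]
    congr 1
    omega
  rw [this, inv_pow, div_eq_mul_inv]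

lemma Gp_zero (K : ℕ) : Gp K 0 = 0 := by
  rw [Gp]
  apply Finset.sum_eq_zero
  intro k _
  rcases k with _ | k <;> simp

lemma Sp_zero (K : ℕ) : Sp K 0 = 1 := by
  rw [Sp, Finset.sum_eq_single 0]
  · simp
  · intro k hk hk'
    exact zero_pow hk'
  · intro h
    exact absurd (Finset.mem_range.mpr (Nat.succ_pos K)) h

/-- m is a strictly increasing continuous function on (0,∞) with m(1) = K/2,
m(ρ) → 0 as ρ → 0⁺ and m(ρ) → K as ρ → ∞. -/
theorem truncated_geometric_mean_mono (K : ℕ) (hK : 1 ≤ K) :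
    StrictMonoOn (m K) (Set.Ioi (0 : ℝ)) ∧
    ContinuousOn (m K) (Set.Ioi (0 : ℝ)) ∧
    m K 1 = K / 2 ∧
    Filter.Tendsto (m K) (nhdsWithin 0 (Set.Ioi 0)) (nhds 0) ∧
    Filter.Tendsto (m K) Filter.atTop (nhds (K : ℝ)) := by
  refine ⟨?_, ?_, ?_, ?_, ?_⟩
  · intro a ha b hb hab
    rw [Set.mem_Ioi] at ha hb
    rw [m_eq K ha, m_eq K hb, div_lt_div_iff₀ (Sp_pos K ha) (Sp_pos K hb)]
    exact gS_lt ha hab K hK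
  · exact (((Gp_cont K).continuousOn).div ((Sp_cont K).continuousOn)
      (fun ρ hρ => ne_of_gt (Sp_pos K hρ))).congr (fun ρ hρ => m_eq K hρ)
  · rw [m_eq K one_pos]
    have hS : Sp K 1 = (K : ℝ) + 1 := by simp [Sp]
    have hG : Gp K 1 * 2 = ((K : ℝ) + 1) * K := by
      rw [Gp]
      simp only [one_pow, mul_one]
      have h : (∑ i ∈ Finset.range (K+1), i) * 2 = (K + 1) * K := by
        rw [Finset.sum_range_id_mul_two (K + 1), Nat.add_sub_cancel]
      have h2 : (((∑ i ∈ Finset.range (K+1), i) * 2 : ℕ) : ℝ)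
          = (((K + 1) * K : ℕ) : ℝ) := by exact_mod_cast h
      push_cast at h2
      convert h2 using 2
    rw [hS]
    have hK1 : (K : ℝ) + 1 ≠ 0 := by positivity
    field_simp
    linear_combination hG
  · have h0 : Filter.Tendsto (fun ρ => Gp K ρ / Sp K ρ) (nhds 0) (nhds 0) := by
      have := Filter.Tendsto.div ((Gp_cont K).tendsto 0) ((Sp_cont K).tendsto 0)
        (by rw [Sp_zero]; exact one_ne_zero)
      rwa [Gp_zero, Sp_zero, zero_div] at this
    refine Filter.Tendsto.congr' ?_ (h0.mono_left nhdsWithin_le_nhds)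
    filter_upwards [self_mem_nhdsWithin] with ρ hρ
    exact (m_eq K hρ).symm
  · have hinv : Filter.Tendsto (fun ρ : ℝ => ρ⁻¹) Filter.atTop (nhds 0) :=
      tendsto_inv_atTop_zero
    have hphi : Filter.Tendsto (fun ρ : ℝ => Phi K ρ⁻¹) Filter.atTop (nhds (K : ℝ)) := by
      have := ((Phi_cont K).tendsto 0).comp hinv
      rwa [Phi_zero] at this
    have hpsi : Filter.Tendsto (fun ρ : ℝ => Psi K ρ⁻¹) Filter.atTop (nhds 1) := by
      have := ((Psi_cont K).tendsto 0).comp hinv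
      rwa [Psi_zero] at this
    have hlim := hphi.div hpsi one_ne_zero
    rw [div_one] at hlim
    refine Filter.Tendsto.congr' ?_ hlim
    filter_upwards [Filter.eventually_gt_atTop (0 : ℝ)] with ρ hρ
    rw [m_eq K hρ, Gp_inv K hρ, Sp_inv K hρ,
      mul_div_mul_left _ _ (pow_ne_zero K (ne_of_gt hρ))]
    rfl
end
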